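/- arXiv:1410.7316 — 6 statements merged into one kernel-verified Lean document; each statement's English description precedes it below -/
import Mathlib

section
/- Let t > 0 and let f : ℝ → ℝ be bounded and continuous. Then the expectation of f under the Gamma distribution with shape n and rate n/t converges to f(t) as n → ∞, i.e., lim_{n→∞} ∫ f(x) dΓ(n, n/t)(x) = f(t). -/
open MeasureTheory ProbabilityTheory Filter

section GammaAux
open Real Set

lemma moment_eqOn {a r : ℝ} (k : ℕ) :
    EqOn (fun x : ℝ => x ^ (a - 1 + k) * Real.exp (-r * x ^ (1:ℝ)))
      (fun x : ℝ => x ^ (a - 1) * Real.exp (-(r * x)) * x ^ k) (Set.Ioi 0) := by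
  intro x hx
  simp only [rpow_one, neg_mul]
  rw [rpow_add hx, rpow_natCast]
  ring

lemma moment_integrableOn {a r : ℝ} (ha : 0 < a) (hr : 0 < r) (k : ℕ) :
    IntegrableOn (fun x : ℝ => x ^ (a - 1) * Real.exp (-(r * x)) * x ^ k) (Set.Ioi 0) := by
  have h := integrableOn_rpow_mul_exp_neg_mul_rpow (p := 1) (s := a - 1 + k) (b := r)
    (by push_cast; linarith [Nat.cast_nonneg (α := ℝ) k]) zero_lt_one hr
  exact h.congr_fun (moment_eqOn k) measurableSet_Ioi

lemma moment_value {a r : ℝ} (ha : 0 < a) (hr : 0 < r) (k : ℕ) :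
    ∫ x in Set.Ioi (0:ℝ), x ^ (a - 1) * Real.exp (-(r * x)) * x ^ k
      = (1/r) ^ (a + k) * Real.Gamma (a + k) := by
  rw [← integral_rpow_mul_exp_neg_mul_Ioi (by positivity : (0:ℝ) < a + k) hr]
  refine setIntegral_congr_fun measurableSet_Ioi fun x hx => ?_
  have := moment_eqOn (a := a) (r := r) k hx
  simp only [rpow_one, neg_mul] at this ⊢
  rw [show a + k - 1 = a - 1 + k by ring]
  rw [rpow_add hx, rpow_natCast]
  ring

lemma pdf_support {a r : ℝ} (k : ℕ) :
    Function.support (fun x : ℝ => gammaPDFReal a r x * x ^ k) ⊆ Set.Ici 0 := by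
  intro x hx
  by_contra h
  simp only [Set.mem_Ici, not_le] at h
  apply hx
  simp [gammaPDFReal, not_le.mpr h]

lemma pdf_moment_integrable {a r : ℝ} (ha : 0 < a) (hr : 0 < r) (k : ℕ) :
    Integrable (fun x : ℝ => gammaPDFReal a r x * x ^ k) := by
  rw [← integrableOn_iff_integrable_of_support_subset (pdf_support k),
    integrableOn_Ici_iff_integrableOn_Ioi]
  refine IntegrableOn.congr_fun ((moment_integrableOn ha hr k).const_mul (r ^ a / Real.Gamma a))
    (fun x hx => ?_) measurableSet_Ioi
  simp only [gammaPDFReal, if_pos (le_of_lt (show (0:ℝ) < x from hx))]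
  ring

lemma pdf_moment_value {a r : ℝ} (ha : 0 < a) (hr : 0 < r) (k : ℕ) :
    ∫ x : ℝ, gammaPDFReal a r x * x ^ k
      = Real.Gamma (a + k) / Real.Gamma a * (1/r) ^ k := by
  rw [← setIntegral_eq_integral_of_forall_compl_eq_zero
    (s := Set.Ici (0:ℝ)) (fun x hx => by
      have := pdf_support (a := a) (r := r) k
      by_contra h
      exact hx (this h)),
    integral_Ici_eq_integral_Ioi]
  rw [setIntegral_congr_fun measurableSet_Ioi
    (g := fun x : ℝ => (r ^ a / Real.Gamma a) * (x ^ (a-1) * Real.exp (-(r * x)) * x ^ k))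
    (fun x hx => by simp only [gammaPDFReal, if_pos (le_of_lt (show (0:ℝ) < x from hx))]; ring)]
  rw [integral_const_mul, moment_value ha hr k]
  have h1 : (1/r : ℝ) ^ (a + (k:ℝ)) = (1/r) ^ a * (1/r) ^ k := by
    rw [rpow_add (by positivity), rpow_natCast]
  have h2 : (r:ℝ) ^ a * (1/r) ^ a = 1 := by
    rw [← mul_rpow hr.le (by positivity), mul_one_div_cancel hr.ne', one_rpow]
  rw [h1]
  linear_combination (Real.Gamma (a + (k:ℝ)) / Real.Gamma a * (1/r) ^ k) * h2

lemma pdf_sq_expand {a r t : ℝ} :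
    (fun x : ℝ => gammaPDFReal a r x * (x - t)^2)
      = fun x => (gammaPDFReal a r x * x^2) + ((-2*t) * (gammaPDFReal a r x * x^1)
          + t^2 * (gammaPDFReal a r x * x^0)) := by
  funext x; ring

lemma pdf_sq_integrable {a r : ℝ} (ha : 0 < a) (hr : 0 < r) (t : ℝ) :
    Integrable (fun x : ℝ => gammaPDFReal a r x * (x - t)^2) := by
  rw [pdf_sq_expand]
  exact (pdf_moment_integrable ha hr 2).add
    (((pdf_moment_integrable ha hr 1).const_mul _).add
      ((pdf_moment_integrable ha hr 0).const_mul _))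

lemma pdf_sq_value {a r : ℝ} (ha : 0 < a) (hr : 0 < r) (t : ℝ) :
    ∫ x : ℝ, gammaPDFReal a r x * (x - t)^2 = a*(a+1)/r^2 - 2*t*(a/r) + t^2 := by
  have hA : Integrable (fun x : ℝ => gammaPDFReal a r x * x^2) := pdf_moment_integrable ha hr 2
  have hB : Integrable (fun x : ℝ => -2*t*(gammaPDFReal a r x * x^1)) :=
    (pdf_moment_integrable ha hr 1).const_mul _
  have hC : Integrable (fun x : ℝ => t^2*(gammaPDFReal a r x * x^0)) :=
    (pdf_moment_integrable ha hr 0).const_mul _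
  have hBC : Integrable (fun x : ℝ => -2*t*(gammaPDFReal a r x * x^1)
      + t^2*(gammaPDFReal a r x * x^0)) := hB.add hC
  rw [pdf_sq_expand, integral_add hA hBC, integral_add hB hC,
    integral_const_mul, integral_const_mul,
    pdf_moment_value ha hr 2, pdf_moment_value ha hr 1, pdf_moment_value ha hr 0]
  have g1 : Real.Gamma (a+1) = a * Real.Gamma a := Real.Gamma_add_one ha.ne'
  have g2 : Real.Gamma (a+2) = (a+1) * (a * Real.Gamma a) := by
    rw [show a+2 = (a+1)+1 by ring, Real.Gamma_add_one (by positivity), g1]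
  have hG : Real.Gamma a ≠ 0 := (Real.Gamma_pos_of_pos ha).ne'
  push_cast
  rw [g1, g2]
  field_simp
  ring

lemma var_value {n : ℕ} (hn : 1 ≤ n) {t : ℝ} (ht : 0 < t) :
    ∫ x : ℝ, gammaPDFReal n ((n:ℝ)/t) x * (x - t)^2 = t^2 / n := by
  have hn' : (0:ℝ) < n := by exact_mod_cast hn
  rw [pdf_sq_value hn' (by positivity) t]
  field_simp
  ring

lemma lint_sq {n : ℕ} (hn : 1 ≤ n) {t : ℝ} (ht : 0 < t) :
    ∫⁻ x, ENNReal.ofReal ((x - t)^2) ∂(gammaMeasure n ((n:ℝ)/t))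
      = ENNReal.ofReal (t^2/n) := by
  have hn' : (0:ℝ) < n := by exact_mod_cast hn
  have hr : (0:ℝ) < (n:ℝ)/t := by positivity
  rw [gammaMeasure, lintegral_withDensity_eq_lintegral_mul _
    (show Measurable (gammaPDF (n:ℝ) ((n:ℝ)/t)) from (measurable_gammaPDFReal _ _).ennreal_ofReal)
    (by measurability : Measurable fun x : ℝ => ENNReal.ofReal ((x - t)^2))]
  have h1 : ∀ x : ℝ, (gammaPDF n ((n:ℝ)/t) * fun x => ENNReal.ofReal ((x - t)^2)) x
      = ENNReal.ofReal (gammaPDFReal n ((n:ℝ)/t) x * (x - t)^2) := fun x => by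
    simp only [Pi.mul_apply, gammaPDF]
    rw [← ENNReal.ofReal_mul (gammaPDFReal_nonneg hn' hr x)]
  rw [lintegral_congr h1, ← ofReal_integral_eq_lintegral_ofReal
    (pdf_sq_integrable hn' hr t)
    (Filter.Eventually.of_forall fun x => mul_nonneg (gammaPDFReal_nonneg hn' hr x) (sq_nonneg _)),
    var_value hn ht]

lemma cheb {n : ℕ} (hn : 1 ≤ n) {t δ : ℝ} (ht : 0 < t) (hδ : 0 < δ) :
    gammaMeasure n ((n:ℝ)/t) {x : ℝ | δ ≤ |x - t|} ≤ ENNReal.ofReal (t^2/n / δ^2) := by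
  set μ := gammaMeasure n ((n:ℝ)/t) with hμ
  set S : Set ℝ := {x : ℝ | δ ≤ |x - t|} with hSdef
  have key : ENNReal.ofReal (δ^2) * μ S ≤ ENNReal.ofReal (t^2/n) := by
    calc ENNReal.ofReal (δ^2) * μ S = ∫⁻ _ in S, ENNReal.ofReal (δ^2) ∂μ :=
          (setLIntegral_const S _).symm
      _ ≤ ∫⁻ x in S, ENNReal.ofReal ((x - t)^2) ∂μ := by
          refine setLIntegral_mono (by measurability) fun x hx => ?_
          refine ENNReal.ofReal_le_ofReal ?_
          have : δ ≤ |x - t| := hx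
          calc δ^2 ≤ |x - t|^2 := by nlinarith [abs_nonneg (x - t)]
            _ = (x - t)^2 := sq_abs _
      _ ≤ ∫⁻ x, ENNReal.ofReal ((x - t)^2) ∂μ := setLIntegral_le_lintegral _ _
      _ = ENNReal.ofReal (t^2/n) := lint_sq hn ht
  have hne : ENNReal.ofReal (δ^2) ≠ 0 := ne_of_gt (ENNReal.ofReal_pos.mpr (by positivity))
  have key' : μ S * ENNReal.ofReal (δ^2) ≤ ENNReal.ofReal (t^2/n) := by
    rw [mul_comm]; exact key
  have h2 := (ENNReal.le_div_iff_mul_le (Or.inl hne) (Or.inl ENNReal.ofReal_ne_top)).2 key'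
  rwa [← ENNReal.ofReal_div_of_pos (by positivity : (0:ℝ) < δ^2)] at h2

end GammaAux

/-- For `t > 0` and a bounded continuous function `f : ℝ → ℝ`, the expectation of `f` under
the Gamma distribution with shape `n` and rate `n / t` converges to `f t` as `n → ∞`. -/
theorem gamma_randomisation_tendsto (t : ℝ) (ht : 0 < t) (f : ℝ → ℝ)
    (hf_cont : Continuous f) (hf_bdd : ∃ C : ℝ, ∀ x : ℝ, |f x| ≤ C) :
    Tendsto (fun n : ℕ => ∫ x, f x ∂(gammaMeasure n ((n : ℝ) / t))) atTop (nhds (f t)) := by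
  obtain ⟨C, hC⟩ := hf_bdd
  have hC0 : 0 ≤ C := le_trans (abs_nonneg _) (hC 0)
  rw [Metric.tendsto_atTop]
  intro ε hε
  obtain ⟨δ, hδ, hδf⟩ := Metric.continuousAt_iff.mp hf_cont.continuousAt (ε/2) (by positivity)
  obtain ⟨N₀, hN₀⟩ := exists_nat_gt (4*C*t^2/(ε*δ^2))
  refine ⟨max 1 N₀, fun n hn => ?_⟩
  have hn1 : 1 ≤ n := le_trans (le_max_left _ _) hn
  have hnN : N₀ ≤ n := le_trans (le_max_right _ _) hn
  have hn' : (0:ℝ) < n := by exact_mod_cast hn1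
  have hr : (0:ℝ) < (n:ℝ)/t := by positivity
  set μ := gammaMeasure n ((n:ℝ)/t) with hμ
  haveI : IsProbabilityMeasure μ := isProbabilityMeasure_gammaMeasure hn' hr
  have hfi : Integrable f μ :=
    (integrable_const C).mono' hf_cont.aestronglyMeasurable
      (Filter.Eventually.of_forall fun x => by simpa [Real.norm_eq_abs] using hC x)
  set S : Set ℝ := {x : ℝ | δ ≤ |x - t|} with hSdef
  have hSm : MeasurableSet S :=
    (isClosed_le continuous_const ((continuous_id.sub continuous_const).abs)).measurableSet
  set g : ℝ → ℝ := fun x => ε/2 + 2*C * S.indicator (fun _ => (1:ℝ)) x with hgdef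
  have hg_int : Integrable g μ :=
    (integrable_const _).add (((integrable_const (1:ℝ)).indicator hSm).const_mul _)
  have hptwise : ∀ x, |f x - f t| ≤ g x := by
    intro x
    by_cases hx : x ∈ S
    · have : S.indicator (fun _ => (1:ℝ)) x = 1 := Set.indicator_of_mem hx _
      simp only [hgdef, this, mul_one]
      have := hC x
      have := hC t
      have h1 : |f x - f t| ≤ |f x| + |f t| := abs_sub _ _
      linarith
    · have hind : S.indicator (fun _ => (1:ℝ)) x = 0 := Set.indicator_of_notMem hx _
      have hxd : dist x t < δ := by
        simp only [hSdef, Set.mem_setOf_eq, not_le] at hx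
        rwa [Real.dist_eq]
      have := le_of_lt (hδf hxd)
      rw [Real.dist_eq] at this
      simp only [hgdef, hind, mul_zero, add_zero]
      exact this
  have hμS : (μ S).toReal ≤ t^2/n/δ^2 :=
    ENNReal.toReal_le_of_le_ofReal (by positivity) (cheb hn1 ht hδ)
  have hdist : dist (∫ x, f x ∂μ) (f t) ≤ ε/2 + 2*C * (t^2/n/δ^2) := by
    have h0 : ∫ x, f x ∂μ - f t = ∫ x, (f x - f t) ∂μ := by
      rw [integral_sub hfi (integrable_const _), integral_const]
      simp
    rw [Real.dist_eq, h0]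
    calc |∫ x, (f x - f t) ∂μ| ≤ ∫ x, |f x - f t| ∂μ := by
          simpa [Real.norm_eq_abs] using
            norm_integral_le_integral_norm (μ := μ) (fun x => f x - f t)
      _ ≤ ∫ x, g x ∂μ := integral_mono (hfi.sub (integrable_const _)).abs hg_int hptwise
      _ = ε/2 + 2*C * (μ S).toReal := by
          rw [hgdef]
          rw [integral_add (integrable_const _)
            (((integrable_const (1:ℝ)).indicator hSm).const_mul _),
            integral_const, integral_const_mul, integral_indicator_const _ hSm]
          simp [Measure.real]
      _ ≤ ε/2 + 2*C * (t^2/n/δ^2) := by nlinarith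
  have hlt : 2*C * (t^2/n/δ^2) < ε/2 := by
    have h : 4*C*t^2/(ε*δ^2) < (n:ℝ) := lt_of_lt_of_le hN₀ (by exact_mod_cast hnN)
    rw [div_lt_iff₀ (by positivity)] at h
    rw [div_div, show 2*C*(t^2/((n:ℝ)*δ^2)) = (2*C*t^2)/((n:ℝ)*δ^2) from by ring,
      div_lt_iff₀ (by positivity)]
    nlinarith
  calc dist (∫ x, f x ∂μ) (f t) ≤ ε/2 + 2*C * (t^2/n/δ^2) := hdist
    _ < ε := by linarith
end

section
/- Let t > 0 and let m ≥ 2 be an integer. Then there exist real numbers c_1, …, c_{m−1} (depending on m and t but not on n) such that for every positive integer n the m-th central moment of the Gamma distribution with shape n and rate n/t satisfies ∫ (x − t)^m dΓ(n, n/t)(x) = Σ_{j=1}^{m−1} c_j n^{−j}. Moreover, for m = 1 one has ∫ (x − t) dΓ(n, n/t)(x) = 0 for every positive integer n. -/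
open MeasureTheory ProbabilityTheory
open MeasureTheory Real Set
open scoped ENNReal NNReal

lemma gamma_ratio (x : ℝ) (hx : 0 < x) (k : ℕ) :
    Real.Gamma (x + k) = (∏ i ∈ Finset.range k, (x + i)) * Real.Gamma x := by
  induction k with
  | zero => simp
  | succ k ih =>
      have hxk : x + (k : ℝ) ≠ 0 := by positivity
      have : x + ((k : ℕ) + 1 : ℕ) = (x + k) + 1 := by push_cast; ring
      rw [this, Real.Gamma_add_one hxk, ih, Finset.prod_range_succ]
      ring

lemma ae_ne_zero : ∀ᵐ (x : ℝ), x ≠ (0:ℝ) := by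
  rw [ae_iff]
  simpa using Real.volume_singleton (x := 0)

lemma pdf_mul_eq_zero {a r : ℝ} {x : ℝ} (hx : x < 0) (g : ℝ → ℝ) :
    gammaPDFReal a r x * g x = 0 := by
  simp [gammaPDFReal, if_neg (not_le.mpr hx)]

lemma gamma_integrable_pow (a r : ℝ) (ha : 0 < a) (hr : 0 < r) (k : ℕ) :
    Integrable (fun x => x ^ k) (gammaMeasure a r) := by
  have hmeas : gammaMeasure a r
      = volume.withDensity (fun x => ENNReal.ofReal (gammaPDFReal a r x)) := rfl
  rw [hmeas, integrable_withDensity_iff (measurable_gammaPDFReal a r).ennreal_ofReal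
    (ae_of_all _ fun x => ENNReal.ofReal_lt_top)]
  have hIoi : IntegrableOn (fun x : ℝ => x ^ k * gammaPDFReal a r x) (Ioi 0) := by
    have base : IntegrableOn (fun x : ℝ => x ^ (a + k - 1) * rexp (-r * x ^ (1:ℝ))) (Ioi 0) :=
      integrableOn_rpow_mul_exp_neg_mul_rpow (by linarith [Nat.cast_nonneg (α := ℝ) k]) zero_lt_one hr
    have : IntegrableOn (fun x : ℝ => x ^ (a + k - 1) * rexp (-(r * x))) (Ioi 0) := by
      refine IntegrableOn.congr_fun base (fun x hx => ?_) measurableSet_Ioi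
      refine Eq.symm ?_
      rw [Real.rpow_one, neg_mul]
    have step : IntegrableOn (fun x : ℝ => (r ^ a / Real.Gamma a) * (x ^ (a + k - 1) * rexp (-(r * x)))) (Ioi 0) := this.const_mul _
    refine IntegrableOn.congr_fun step (fun x hx => ?_) measurableSet_Ioi
    refine Eq.symm ?_
    rw [mem_Ioi] at hx
    rw [gammaPDFReal, if_pos hx.le]
    rw [show x ^ k = x ^ (k : ℝ) by rw [Real.rpow_natCast]]
    rw [show x ^ (a + k - 1) = x ^ (a - 1) * x ^ (k : ℝ) by
      rw [← Real.rpow_add hx]; ring_nf]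
    ring
  have hind := (integrable_indicator_iff (measurableSet_Ioi (a := (0:ℝ)))).2 hIoi
  refine hind.congr ?_
  filter_upwards [ae_ne_zero] with x hx0
  simp only [ENNReal.toReal_ofReal (gammaPDFReal_nonneg ha hr x)]
  by_cases hx : x ∈ Ioi (0:ℝ)
  · rw [Set.indicator_of_mem hx]
  · rw [Set.indicator_of_notMem hx]
    have hxn : x < 0 := lt_of_le_of_ne (not_lt.mp hx) hx0
    rw [mul_comm]
    exact (pdf_mul_eq_zero hxn _).symm

lemma gamma_moment (a r : ℝ) (ha : 0 < a) (hr : 0 < r) (k : ℕ) :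
    ∫ x, x ^ k ∂(gammaMeasure a r) = Real.Gamma (a + k) / (Real.Gamma a * r ^ k) := by
  have hmeas : gammaMeasure a r
      = volume.withDensity (fun x => ((gammaPDFReal a r x).toNNReal : ℝ≥0∞)) := rfl
  rw [hmeas, integral_withDensity_eq_integral_smul
    (measurable_gammaPDFReal a r).real_toNNReal _]
  have h1 : ∫ x, (gammaPDFReal a r x).toNNReal • x ^ k
      = ∫ x, gammaPDFReal a r x * x ^ k := by
    refine integral_congr_ae (ae_of_all _ fun x => ?_)
    simp [NNReal.smul_def, Real.coe_toNNReal _ (gammaPDFReal_nonneg ha hr x)]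
  rw [h1]
  rw [← setIntegral_eq_integral_of_ae_compl_eq_zero (s := Ioi 0) ?hc]
  case hc =>
    filter_upwards [ae_ne_zero] with x hx0 hx
    exact pdf_mul_eq_zero (lt_of_le_of_ne (not_lt.mp hx) hx0) _
  have h2 : ∫ x in Ioi (0:ℝ), gammaPDFReal a r x * x ^ k
      = ∫ x in Ioi (0:ℝ), (r ^ a / Real.Gamma a) * (x ^ (a + k - 1) * rexp (-(r * x))) := by
    refine setIntegral_congr_fun measurableSet_Ioi (fun x hx => ?_)
    rw [mem_Ioi] at hx
    rw [gammaPDFReal, if_pos hx.le]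
    rw [show x ^ k = x ^ (k : ℝ) by rw [Real.rpow_natCast]]
    rw [show x ^ (a + k - 1) = x ^ (a - 1) * x ^ (k : ℝ) by
      rw [← Real.rpow_add hx]; ring_nf]
    ring
  rw [h2, integral_const_mul,
    show a + (k : ℝ) - 1 = (a + k) - 1 from rfl,
    integral_rpow_mul_exp_neg_mul_Ioi (by positivity) hr]
  have hG : Real.Gamma a ≠ 0 := (Real.Gamma_pos_of_pos ha).ne'
  have key : r ^ a * (1 / r) ^ (a + (k:ℝ)) = (r ^ k : ℝ)⁻¹ := by
    rw [one_div, ← Real.rpow_neg_one r, ← Real.rpow_natCast r k,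
      ← Real.rpow_mul hr.le, ← Real.rpow_add hr, ← Real.rpow_neg hr.le]
    ring_nf
  have hrk : (r:ℝ)^k ≠ 0 := by positivity
  have key' : r ^ a * (1 / r) ^ (a + (k:ℝ)) * r ^ k = 1 := by
    rw [key]; exact inv_mul_cancel₀ hrk
  field_simp
  linear_combination key'

lemma gamma_moment_nat (t : ℝ) (ht : 0 < t) (n : ℕ) (hn : 0 < n) (k : ℕ) :
    ∫ x, x ^ k ∂(gammaMeasure n ((n:ℝ)/t)) =
      t ^ k * ∏ i ∈ Finset.range k, (1 + (i:ℝ)/n) := by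
  have hn' : (0:ℝ) < n := by exact_mod_cast hn
  rw [gamma_moment n ((n:ℝ)/t) hn' (by positivity) k, gamma_ratio n hn' k]
  have hG : Real.Gamma n ≠ 0 := (Real.Gamma_pos_of_pos hn').ne'
  have hprod : ∏ i ∈ Finset.range k, (1 + (i:ℝ)/n)
      = (∏ i ∈ Finset.range k, ((n:ℝ) + i)) / (n:ℝ)^k := by
    rw [show (n:ℝ)^k = ∏ _i ∈ Finset.range k, (n:ℝ) by
      rw [Finset.prod_const, Finset.card_range], ← Finset.prod_div_distrib]
    refine Finset.prod_congr rfl fun i _ => ?_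
    field_simp
  rw [hprod, div_pow]
  field_simp

lemma gamma_first_moment (t : ℝ) (ht : 0 < t) (n : ℕ) (hn : 0 < n) :
    ∫ x, (x - t) ∂(gammaMeasure n ((n:ℝ)/t)) = 0 := by
  have hn' : (0:ℝ) < n := by exact_mod_cast hn
  have hr : (0:ℝ) < (n:ℝ)/t := by positivity
  have h1 : Integrable (fun x : ℝ => x) (gammaMeasure n ((n:ℝ)/t)) := by
    simpa using gamma_integrable_pow n ((n:ℝ)/t) hn' hr 1
  have : IsProbabilityMeasure (gammaMeasure (n:ℝ) ((n:ℝ)/t)) :=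
    ProbabilityTheory.isProbabilityMeasure_gammaMeasure hn' hr
  rw [integral_sub h1 (integrable_const t), integral_const, probReal_univ,
    one_smul]
  have hm := gamma_moment_nat t ht n hn 1
  simp only [pow_one, Finset.range_one, Finset.prod_singleton, Nat.cast_zero, zero_div,
    add_zero, mul_one] at hm
  rw [show (fun x : ℝ => x) = fun x : ℝ => x ^ 1 by funext x; rw [pow_one]] at h1 ⊢
  simp only [pow_one] at hm ⊢
  rw [hm, sub_self]

open Polynomial in
noncomputable def gammaQ (k : ℕ) : Polynomial ℝ :=
  ∏ i ∈ Finset.Ico 1 k, (Polynomial.C (i:ℝ) * Polynomial.X + 1)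

open Polynomial in
noncomputable def gammaP (m : ℕ) (t : ℝ) : Polynomial ℝ :=
  ∑ k ∈ Finset.range (m+1),
    Polynomial.C ((m.choose k : ℝ) * (-t)^(m-k) * t^k) * gammaQ k

lemma gammaQ_eval (k : ℕ) (x : ℝ) :
    (gammaQ k).eval x = ∏ i ∈ Finset.range k, (1 + (i:ℝ) * x) := by
  rcases Nat.eq_zero_or_pos k with hk | hk
  · simp [hk, gammaQ]
  · rw [Finset.range_eq_Ico, Finset.prod_eq_prod_Ico_succ_bot hk]
    simp only [Nat.cast_zero, zero_mul, add_zero, one_mul]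
    rw [gammaQ, Polynomial.eval_prod]
    refine Finset.prod_congr rfl fun i _ => ?_
    simp [mul_comm, add_comm]

lemma gammaP_natDegree_le (m : ℕ) (t : ℝ) (hm : 1 ≤ m) : (gammaP m t).natDegree ≤ m - 1 := by
  apply Polynomial.natDegree_sum_le_of_forall_le
  intro k hk
  rw [Finset.mem_range, Nat.lt_succ_iff] at hk
  refine (Polynomial.natDegree_C_mul_le _ _).trans ?_
  refine (Polynomial.natDegree_prod_le _ _).trans ?_
  calc ∑ i ∈ Finset.Ico 1 k, (Polynomial.C (i:ℝ) * Polynomial.X + 1).natDegree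
      ≤ ∑ _i ∈ Finset.Ico 1 k, 1 := by
        refine Finset.sum_le_sum fun i _ => ?_
        refine (Polynomial.natDegree_add_le _ _).trans ?_
        simp only [Polynomial.natDegree_one, max_le_iff]
        exact ⟨(Polynomial.natDegree_C_mul_le _ _).trans (by simp), Nat.zero_le 1⟩
    _ = k - 1 := by simp [Nat.card_Ico]
    _ ≤ m - 1 := by omega

lemma gammaP_coeff_zero (m : ℕ) (t : ℝ) (hm : 1 ≤ m) : (gammaP m t).coeff 0 = 0 := by
  rw [Polynomial.coeff_zero_eq_eval_zero, gammaP, Polynomial.eval_finset_sum]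
  have h0 : ∀ k, (gammaQ k).eval 0 = 1 := by
    intro k; rw [gammaQ_eval]; simp
  simp only [Polynomial.eval_mul, Polynomial.eval_C, h0, mul_one]
  have hz : ((0:ℝ))^m = ∑ k ∈ Finset.range (m+1), t^k * (-t)^(m-k) * (m.choose k : ℝ) := by
    rw [← add_pow]; simp
  rw [zero_pow (by omega : m ≠ 0)] at hz
  rw [hz]
  exact Finset.sum_congr rfl fun k _ => by ring

lemma gamma_central_eval (t : ℝ) (ht : 0 < t) (m : ℕ) (n : ℕ) (hn : 0 < n) :
    ∫ x, (x - t) ^ m ∂(gammaMeasure n ((n:ℝ)/t)) = (gammaP m t).eval (1/(n:ℝ)) := by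
  have hn' : (0:ℝ) < n := by exact_mod_cast hn
  have hr : (0:ℝ) < (n:ℝ)/t := by positivity
  have expand : ∀ x : ℝ, (x - t)^m
      = ∑ k ∈ Finset.range (m+1), ((m.choose k : ℝ) * (-t)^(m-k)) * x^k := by
    intro x
    rw [sub_pow]
    refine Finset.sum_congr rfl fun k hk => ?_
    rw [Finset.mem_range, Nat.lt_succ_iff] at hk
    rw [show k + m = (m - k) + 2 * k by omega, pow_add, pow_mul, neg_one_sq, one_pow, mul_one,
      show (-t:ℝ)^(m-k) = (-1)^(m-k) * t^(m-k) by rw [neg_pow]]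
    ring
  have hint : ∀ k ∈ Finset.range (m+1),
      Integrable (fun x : ℝ => ((m.choose k : ℝ) * (-t)^(m-k)) * x^k)
        (gammaMeasure n ((n:ℝ)/t)) :=
    fun k _ => (gamma_integrable_pow n ((n:ℝ)/t) hn' hr k).const_mul _
  calc ∫ x, (x - t)^m ∂(gammaMeasure n ((n:ℝ)/t))
      = ∫ x, ∑ k ∈ Finset.range (m+1), ((m.choose k : ℝ) * (-t)^(m-k)) * x^k
          ∂(gammaMeasure n ((n:ℝ)/t)) :=
        integral_congr_ae (ae_of_all _ fun x => expand x)
    _ = ∑ k ∈ Finset.range (m+1),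
          ∫ x, ((m.choose k : ℝ) * (-t)^(m-k)) * x^k ∂(gammaMeasure n ((n:ℝ)/t)) :=
        integral_finset_sum _ hint
    _ = ∑ k ∈ Finset.range (m+1),
          ((m.choose k : ℝ) * (-t)^(m-k) * t^k) * (gammaQ k).eval (1/(n:ℝ)) := by
        refine Finset.sum_congr rfl fun k _ => ?_
        rw [integral_const_mul, gamma_moment_nat t ht n hn k, gammaQ_eval]
        rw [show ∏ i ∈ Finset.range k, (1 + (i:ℝ) * (1/(n:ℝ)))
            = ∏ i ∈ Finset.range k, (1 + (i:ℝ)/(n:ℝ)) from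
          Finset.prod_congr rfl fun i _ => by rw [mul_one_div]]
        ring
    _ = (gammaP m t).eval (1/(n:ℝ)) := by
        rw [gammaP, Polynomial.eval_finset_sum]
        exact Finset.sum_congr rfl fun k _ => by rw [Polynomial.eval_mul, Polynomial.eval_C]

/-- For `t > 0` and an integer `m ≥ 2`, there are constants `c_1, …, c_{m-1}` (independent
of `n`) such that the `m`-th central moment of the Gamma distribution with shape `n` and
rate `n / t` equals `∑_{j=1}^{m-1} c_j n^{-j}` for every positive integer `n`; moreover the
first central moment vanishes for every positive integer `n`. -/
theorem gamma_central_moment_expansion (t : ℝ) (ht : 0 < t) (m : ℕ) (hm : 2 ≤ m) :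
    (∃ c : ℕ → ℝ, ∀ n : ℕ, 0 < n →
        ∫ x, (x - t) ^ m ∂(gammaMeasure n ((n : ℝ) / t)) =
          ∑ j ∈ Finset.Icc 1 (m - 1), c j * (n : ℝ) ^ (-(j : ℤ))) ∧
      ∀ n : ℕ, 0 < n → ∫ x, (x - t) ∂(gammaMeasure n ((n : ℝ) / t)) = 0 := by
  constructor
  · refine ⟨fun j => (gammaP m t).coeff j, fun n hn => ?_⟩
    have hn' : (0:ℝ) < n := by exact_mod_cast hn
    rw [gamma_central_eval t ht m n hn]
    have hdeg : (gammaP m t).natDegree < m :=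
      lt_of_le_of_lt (gammaP_natDegree_le m t (by omega)) (by omega)
    rw [Polynomial.eval_eq_sum_range' hdeg]
    rw [Finset.range_eq_Ico, Finset.sum_eq_sum_Ico_succ_bot (by omega : 0 < m)]
    rw [gammaP_coeff_zero m t (by omega), zero_mul, zero_add]
    rw [show Finset.Ico 1 m = Finset.Icc 1 (m-1) by
      rw [← Finset.Ico_add_one_right_eq_Icc, Nat.sub_add_cancel (by omega)]]
    refine Finset.sum_congr rfl fun j _ => ?_
    congr 1
    rw [zpow_neg, zpow_natCast, one_div, inv_pow]
  · exact fun n hn => gamma_first_moment t ht n hn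
end

section
/- Let t > 0 and let m be a positive integer. Then the rescaled even central moments of the Gamma distribution with shape n and rate n/t converge to the corresponding Gaussian moment: lim_{n→∞} n^m ∫ (x − t)^{2m} dΓ(n, n/t)(x) = ((2m)! / (2^m m!)) · t^{2m}. -/
open scoped ENNReal NNReal
open MeasureTheory ProbabilityTheory Filter Real Set Finset

namespace GammaAux

noncomputable def asc (a : ℝ) (k : ℕ) : ℝ := ∏ i ∈ Finset.range k, (a + i)

noncomputable def D (k : ℕ) (a : ℝ) : ℝ :=
  ∑ j ∈ range (k+1), (k.choose j : ℝ) * (-a)^(k-j) * asc a j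

noncomputable def E (k : ℕ) (a : ℝ) : ℝ :=
  ∑ j ∈ range (k+1), (j : ℝ) * (k.choose j : ℝ) * (-a)^(k-j) * asc a j

lemma asc_succ (a : ℝ) (k : ℕ) : asc a (k+1) = asc a k * (a + k) := by
  simp [asc, Finset.prod_range_succ]

lemma L0 (k : ℕ) (a : ℝ) :
    ∑ i ∈ range (k+1), (k.choose i : ℝ) * (-a)^(k-i) * asc a (i+1)
      = a * D k a + E k a := by
  simp only [asc_succ, D, E, Finset.mul_sum, ← Finset.sum_add_distrib]
  refine Finset.sum_congr rfl fun i _ => by ring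

lemma D_succ_eq_E (k : ℕ) (a : ℝ) : D (k+1) a = E k a := by
  have hsplit : D (k+1) a =
      (∑ i ∈ range (k+1), ((k.choose (i+1) : ℝ) + (k.choose i : ℝ)) * (-a)^(k-i) * asc a (i+1))
        + (-a)^(k+1) := by
    rw [D, Finset.sum_range_succ']
    congr 1
    · refine Finset.sum_congr rfl fun i hi => ?_
      rw [Nat.succ_sub_succ, Nat.choose_succ_succ]
      push_cast
      ring
    · show ((k+1).choose 0 : ℝ) * (-a)^(k+1-0) * asc a 0 = (-a)^(k+1)
      rw [Nat.choose_zero_right, Nat.sub_zero]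
      simp [asc]
  have hneg : (∑ i ∈ range (k+1), (k.choose (i+1) : ℝ) * (-a)^(k-i) * asc a (i+1))
      + (-a)^(k+1) = -a * D k a := by
    rw [D, Finset.mul_sum, Finset.sum_range_succ, Finset.sum_range_succ']
    simp only [Nat.choose_succ_self, Nat.cast_zero, zero_mul, mul_zero, add_zero]
    have : ∀ i ∈ range k, (k.choose (i+1) : ℝ) * (-a)^(k-i) * asc a (i+1)
        = -a * ((k.choose (i+1) : ℝ) * (-a)^(k-(i+1)) * asc a (i+1)) := by
      intro i hi
      rw [Finset.mem_range] at hi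
      rw [show k - i = (k - (i+1)) + 1 by omega, pow_succ]
      ring
    rw [Finset.sum_congr rfl this]
    congr 1
    simp [asc, pow_succ, pow_succ']
    try ring
  have := L0 k a
  calc D (k+1) a
      = (∑ i ∈ range (k+1), (k.choose (i+1) : ℝ) * (-a)^(k-i) * asc a (i+1) + (-a)^(k+1))
        + ∑ i ∈ range (k+1), (k.choose i : ℝ) * (-a)^(k-i) * asc a (i+1) := by
        rw [hsplit]; rw [Finset.sum_congr rfl (fun i _ => by ring :
          ∀ i ∈ range (k+1), ((k.choose (i+1) : ℝ) + (k.choose i : ℝ)) * (-a)^(k-i) * asc a (i+1)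
            = (k.choose (i+1) : ℝ) * (-a)^(k-i) * asc a (i+1)
              + (k.choose i : ℝ) * (-a)^(k-i) * asc a (i+1)), Finset.sum_add_distrib]
        ring
    _ = -a * D k a + (a * D k a + E k a) := by rw [hneg, this]
    _ = E k a := by ring

lemma E_succ (k : ℕ) (a : ℝ) : E (k+1) a = (k+1) * (a * D k a + E k a) := by
  rw [E, Finset.sum_range_succ']
  simp only [Nat.cast_zero, zero_mul]
  have : ∀ i ∈ range (k+1), ((i:ℝ)+1) * ((k+1).choose (i+1) : ℝ) * (-a)^(k+1-(i+1)) * asc a (i+1)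
      = (k+1) * ((k.choose i : ℝ) * (-a)^(k-i) * asc a (i+1)) := by
    intro i hi
    have h1 : (i+1) * ((k+1).choose (i+1)) = (k+1) * (k.choose i) := by
      rw [mul_comm]
      exact (Nat.add_one_mul_choose_eq k i).symm
    have h2 : ((i:ℝ)+1) * ((k+1).choose (i+1) : ℝ) = (k+1) * (k.choose i : ℝ) := by
      exact_mod_cast congrArg (Nat.cast : ℕ → ℝ) h1
    rw [Nat.succ_sub_succ]
    calc ((i:ℝ)+1) * ((k+1).choose (i+1) : ℝ) * (-a)^(k-i) * asc a (i+1)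
        = (((i:ℝ)+1) * ((k+1).choose (i+1) : ℝ)) * ((-a)^(k-i) * asc a (i+1)) := by ring
      _ = ((k:ℝ)+1) * (k.choose i : ℝ) * ((-a)^(k-i) * asc a (i+1)) := by rw [h2]
      _ = (k+1) * ((k.choose i : ℝ) * (-a)^(k-i) * asc a (i+1)) := by push_cast; ring
  rw [Finset.sum_congr rfl (by exact_mod_cast this), ← Finset.mul_sum, L0]
  push_cast; ring

lemma D_rec (k : ℕ) (a : ℝ) : D (k+2) a = (k+1) * (D (k+1) a + a * D k a) := by
  rw [show k+2 = (k+1)+1 from rfl, D_succ_eq_E, E_succ, D_succ_eq_E]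
  ring

lemma D_zero (a : ℝ) : D 0 a = 1 := by simp [D, asc]

lemma D_one (a : ℝ) : D 1 a = 0 := by
  simp [D, asc, Finset.sum_range_succ]


lemma D_lim (m : ℕ) :
    Tendsto (fun n : ℕ => D (2*m) n / (n:ℝ)^m) atTop
      (nhds (((2*m).factorial : ℝ) / (2^m * (m.factorial : ℝ))))
    ∧ Tendsto (fun n : ℕ => D (2*m+1) n / (n:ℝ)^(m+1)) atTop (nhds 0) := by
  induction m with
  | zero =>
      constructor
      · have : (fun n : ℕ => D (2*0) n / (n:ℝ)^0) = fun _ => 1 := by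
          funext n; simp [D_zero]
        rw [this]
        norm_num [Nat.factorial]
      · have : (fun n : ℕ => D (2*0+1) n / (n:ℝ)^(0+1)) = fun n : ℕ => 0 := by
          funext n; simp [D_one]
        rw [this]
        exact tendsto_const_nhds
  | succ m ih =>
      obtain ⟨h1, h2⟩ := ih
      have hinv : Tendsto (fun n : ℕ => ((n:ℝ))⁻¹) atTop (nhds 0) :=
        tendsto_inv_atTop_zero.comp tendsto_natCast_atTop_atTop
      -- even part
      have hA : Tendsto (fun n : ℕ => D (2*(m+1)) n / (n:ℝ)^(m+1)) atTop
          (nhds ((2*m+1) * (((2*m).factorial : ℝ) / (2^m * (m.factorial : ℝ))))) := by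
        have heq : ∀ᶠ n : ℕ in atTop,
            ((2*m+1 : ℕ) : ℝ) * (D (2*m+1) n / (n:ℝ)^(m+1) + D (2*m) n / (n:ℝ)^m)
              = D (2*(m+1)) n / (n:ℝ)^(m+1) := by
          filter_upwards [eventually_ge_atTop 1] with n hn
          have hn0 : (n:ℝ) ≠ 0 := by positivity
          rw [show 2*(m+1) = (2*m)+2 by ring, D_rec]
          push_cast
          field_simp
          ring
        refine Tendsto.congr' heq ?_
        have := (h2.add h1).const_mul ((2*m+1 : ℕ) : ℝ)
        rw [zero_add] at this
        exact_mod_cast this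
      have hval : ((2*m+1 : ℕ) : ℝ) * (((2*m).factorial : ℝ) / (2^m * (m.factorial : ℝ)))
          = ((2*(m+1)).factorial : ℝ) / (2^(m+1) * ((m+1).factorial : ℝ)) := by
        rw [show 2*(m+1) = (2*m+1)+1 by ring]
        simp only [Nat.factorial_succ]
        push_cast
        have : ((2*m).factorial : ℝ) ≠ 0 := by positivity
        have : (m.factorial : ℝ) ≠ 0 := by positivity
        field_simp
        ring
      have hA' : Tendsto (fun n : ℕ => D (2*(m+1)) n / (n:ℝ)^(m+1)) atTop
          (nhds (((2*(m+1)).factorial : ℝ) / (2^(m+1) * ((m+1).factorial : ℝ)))) := by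
        rw [← hval]; exact_mod_cast hA
      refine ⟨hA', ?_⟩
      -- odd part
      have heq : ∀ᶠ n : ℕ in atTop,
          ((2*m+2 : ℕ) : ℝ) * (D (2*(m+1)) n / (n:ℝ)^(m+1) * ((n:ℝ))⁻¹ + D (2*m+1) n / (n:ℝ)^(m+1))
            = D (2*(m+1)+1) n / (n:ℝ)^(m+1+1) := by
        filter_upwards [eventually_ge_atTop 1] with n hn
        have hn0 : (n:ℝ) ≠ 0 := by positivity
        rw [show 2*(m+1)+1 = (2*m+1)+2 by ring, D_rec,
          show (2*m+1)+1 = 2*(m+1) by ring]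
        push_cast
        field_simp
        ring
      refine Tendsto.congr' heq ?_
      have := ((hA'.mul hinv).add h2).const_mul ((2*m+2 : ℕ) : ℝ)
      simpa using this


lemma Gamma_add_nat {a : ℝ} (ha : 0 < a) (k : ℕ) :
    Real.Gamma (a + k) = Real.Gamma a * ∏ i ∈ range k, (a + i) := by
  induction k with
  | zero => simp
  | succ k ih =>
      have h : a + (k+1:ℕ) = (a + k) + 1 := by push_cast; ring
      rw [h, Real.Gamma_add_one (by positivity), ih, Finset.prod_range_succ]
      ring

variable {a r : ℝ} (ha : 0 < a) (hr : 0 < r) (k : ℕ)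

include ha hr in
lemma core_integrableOn :
    IntegrableOn (fun x : ℝ => r^a / Real.Gamma a * x^(a-1) * Real.exp (-(r*x)) * x^k)
      (Set.Ici 0) := by
  rw [integrableOn_Ici_iff_integrableOn_Ioi]
  have base : IntegrableOn (fun x : ℝ => x ^ (a + k - 1) * Real.exp (-(r * x))) (Set.Ioi 0) := by
    have := integrableOn_rpow_mul_exp_neg_mul_rpow
      (show (-1:ℝ) < a + k - 1 by push_cast; linarith) one_pos hr
    refine this.congr_fun (fun x hx => ?_) measurableSet_Ioi
    beta_reduce
    rw [Real.rpow_one]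
    ring_nf
  have : IntegrableOn (fun x : ℝ =>
      r^a / Real.Gamma a * (x ^ (a + k - 1) * Real.exp (-(r * x)))) (Set.Ioi 0) :=
    base.const_mul _
  refine this.congr_fun (fun x hx => ?_) measurableSet_Ioi
  have hx : (0:ℝ) < x := hx
  beta_reduce
  rw [show a + k - 1 = (a - 1) + (k:ℝ) by ring, Real.rpow_add hx, Real.rpow_natCast]
  ring

lemma pdf_mul_eq :
    (fun x : ℝ => gammaPDFReal a r x * x^k)
      = Set.indicator (Set.Ici 0)
          (fun x : ℝ => r^a / Real.Gamma a * x^(a-1) * Real.exp (-(r*x)) * x^k) := by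
  funext x
  by_cases hx : (0:ℝ) ≤ x
  · simp [gammaPDFReal, hx, Set.indicator_of_mem, Set.mem_Ici]
  · simp [gammaPDFReal, hx, Set.indicator_of_notMem, Set.mem_Ici]

include ha hr in
lemma gamma_integrable_pow : Integrable (fun x : ℝ => x^k) (gammaMeasure a r) := by
  have hmeas : Measurable fun x => (gammaPDFReal a r x).toNNReal :=
    (measurable_gammaPDFReal a r).real_toNNReal
  have hμ : gammaMeasure a r = volume.withDensity fun x => ((gammaPDFReal a r x).toNNReal : ℝ≥0∞) := rfl
  rw [hμ, integrable_withDensity_iff_integrable_smul hmeas]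
  have : (fun x : ℝ => (gammaPDFReal a r x).toNNReal • x^k)
      = fun x : ℝ => gammaPDFReal a r x * x^k := by
    funext x
    rw [NNReal.smul_def, smul_eq_mul, Real.coe_toNNReal _ (gammaPDFReal_nonneg ha hr x)]
  rw [this, pdf_mul_eq]
  exact (integrable_indicator_iff measurableSet_Ici).2 (core_integrableOn ha hr k)

include ha hr in
lemma gamma_moment :
    ∫ x, x^k ∂(gammaMeasure a r) = (∏ i ∈ range k, (a + i)) / r^k := by
  have hmeas : Measurable fun x => (gammaPDFReal a r x).toNNReal :=
    (measurable_gammaPDFReal a r).real_toNNReal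
  have hμ : gammaMeasure a r = volume.withDensity fun x => ((gammaPDFReal a r x).toNNReal : ℝ≥0∞) := rfl
  rw [hμ, integral_withDensity_eq_integral_smul hmeas]
  have h1 : (fun x : ℝ => (gammaPDFReal a r x).toNNReal • x^k)
      = fun x : ℝ => gammaPDFReal a r x * x^k := by
    funext x
    rw [NNReal.smul_def, smul_eq_mul, Real.coe_toNNReal _ (gammaPDFReal_nonneg ha hr x)]
  rw [h1, pdf_mul_eq, integral_indicator measurableSet_Ici,
    integral_Ici_eq_integral_Ioi]
  have h2 : ∀ x ∈ Set.Ioi (0:ℝ),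
      r^a / Real.Gamma a * x^(a-1) * Real.exp (-(r*x)) * x^k
        = r^a / Real.Gamma a * (x ^ (a + k - 1) * Real.exp (-(r * x))) := by
    intro x hx
    have hx : (0:ℝ) < x := hx
    rw [show a + (k:ℝ) - 1 = (a - 1) + (k:ℝ) by ring, Real.rpow_add hx, Real.rpow_natCast]
    ring
  rw [setIntegral_congr_fun measurableSet_Ioi h2, integral_const_mul,
    integral_rpow_mul_exp_neg_mul_Ioi (by positivity) hr,
    Gamma_add_nat ha k]
  have hG : Real.Gamma a ≠ 0 := (Real.Gamma_pos_of_pos ha).ne'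
  have e1 : ((1:ℝ)/r) ^ (a + (k:ℝ)) = (r ^ a)⁻¹ * ((r:ℝ)^k)⁻¹ := by
    rw [one_div, Real.inv_rpow hr.le, Real.rpow_add hr, Real.rpow_natCast, mul_inv]
  rw [e1]
  have hra : (0:ℝ) < r ^ a := Real.rpow_pos_of_pos hr a
  field_simp


lemma key (t : ℝ) (ht : 0 < t) (m : ℕ) (n : ℕ) (hn : 1 ≤ n) :
    (n:ℝ)^m * ∫ x, (x - t)^(2*m) ∂(gammaMeasure n ((n:ℝ)/t))
      = t^(2*m) * (D (2*m) n / (n:ℝ)^m) := by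
  have hn0 : (0:ℝ) < n := by exact_mod_cast hn
  have hr : 0 < (n:ℝ)/t := by positivity
  have hexp : (fun x : ℝ => (x - t)^(2*m))
      = fun x => ∑ k ∈ range (2*m+1),
          ((-1:ℝ)^(k+2*m) * t^(2*m-k) * (((2*m).choose k : ℕ) : ℝ)) * x^k := by
    funext x
    rw [sub_pow]
    exact Finset.sum_congr rfl fun k _ => by ring
  have hint : ∫ x, (x - t)^(2*m) ∂(gammaMeasure n ((n:ℝ)/t))
      = ∑ k ∈ range (2*m+1), ((-1:ℝ)^(k+2*m) * t^(2*m-k) * (((2*m).choose k : ℕ) : ℝ))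
          * ((∏ i ∈ range k, ((n:ℝ) + i)) / (((n:ℝ)/t))^k) := by
    rw [hexp, integral_finset_sum _
      (fun k _ => (gamma_integrable_pow hn0 hr k).const_mul _)]
    refine Finset.sum_congr rfl fun k _ => ?_
    rw [integral_const_mul, gamma_moment hn0 hr k]
  rw [hint, Finset.mul_sum]
  simp only [D, asc]
  rw [Finset.sum_div, Finset.mul_sum]
  refine Finset.sum_congr rfl fun k hk => ?_
  rw [Finset.mem_range] at hk
  have hk' : k ≤ 2*m := by omega
  have h1 : ((-1:ℝ))^(k+2*m) = (-1)^(2*m-k) := by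
    rw [show k+2*m = (2*m-k) + 2*k by omega, pow_add, pow_mul]
    norm_num
  have hnk : ((n:ℝ))^m * (n:ℝ)^m = (n:ℝ)^(2*m-k) * (n:ℝ)^k := by
    rw [← pow_add, ← pow_add]; congr 1; omega
  have htk : (t:ℝ)^(2*m) = t^(2*m-k) * t^k := by
    rw [← pow_add]; congr 1; omega
  rw [h1, div_pow, neg_pow, htk]
  generalize 2*m - k = e at hnk ⊢
  field_simp
  linear_combination ((-1:ℝ))^e * (((2*m).choose k : ℕ) : ℝ) * hnk


end GammaAux

open MeasureTheory ProbabilityTheory Filter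

/-- For `t > 0` and a positive integer `m`, the rescaled even central moments of the Gamma
distribution with shape `n` and rate `n / t` converge to the corresponding Gaussian moment:
`n^m ∫ (x - t)^{2m} dΓ(n, n/t)(x) → ((2m)! / (2^m m!)) t^{2m}` as `n → ∞`. -/
theorem gamma_central_moment_gaussian_limit (t : ℝ) (ht : 0 < t) (m : ℕ) (hm : 0 < m) :
    Tendsto (fun n : ℕ =>
        (n : ℝ) ^ m * ∫ x, (x - t) ^ (2 * m) ∂(gammaMeasure n ((n : ℝ) / t)))
      atTop
      (nhds (((2 * m).factorial / (2 ^ m * m.factorial) : ℝ) * t ^ (2 * m))) := by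
  have h := (GammaAux.D_lim m).1.const_mul (t^(2*m))
  refine Tendsto.congr' ?_ (h.congr' (EventuallyEq.refl _ _) |>.mono_right ?_)
  · filter_upwards [eventually_ge_atTop 1] with n hn
    exact (GammaAux.key t ht m n hn).symm
  · rw [mul_comm]
end

section
/- Let k be a non-negative integer, let t > 0, and let f : ℝ → ℝ be (2k+2)-times continuously differentiable with bounded (2k+2)-th derivative. Then there exist real numbers b_1, …, b_{k+1} such that lim_{n→∞} n^{k+1} [ ∫ f(x) dΓ(n, n/t)(x) − f(t) − Σ_{m=1}^{k} b_m n^{−m} ] = b_{k+1}. -/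
open MeasureTheory ProbabilityTheory Filter
open scoped ENNReal NNReal
open Set Real Finset

-- piece 1: basic integral lemmas
lemma myIntegrableOn_pow_mul_exp (p : ℕ) {b : ℝ} (hb : 0 < b) :
    IntegrableOn (fun x : ℝ => x ^ p * Real.exp (-(b * x))) (Ioi 0) := by
  have h := integrableOn_rpow_mul_exp_neg_mul_rpow (p := 1) (s := (p : ℝ))
    (lt_of_lt_of_le neg_one_lt_zero (Nat.cast_nonneg p)) one_pos hb
  refine h.congr_fun (fun x hx => ?_) measurableSet_Ioi
  beta_reduce
  rw [Real.rpow_natCast, Real.rpow_one, neg_mul]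

lemma myIntegral_pow_mul_exp (p : ℕ) {b : ℝ} (hb : 0 < b) :
    ∫ x in Ioi (0:ℝ), x ^ p * Real.exp (-(b * x)) = (p.factorial : ℝ) / b ^ (p + 1) := by
  have h := Real.integral_rpow_mul_exp_neg_mul_Ioi (a := (p : ℝ) + 1) (by positivity) hb
  rw [show ((p : ℝ) + 1 - 1) = (p : ℝ) by ring] at h
  have : ∫ x in Ioi (0:ℝ), x ^ p * Real.exp (-(b * x))
      = ∫ x in Ioi (0:ℝ), x ^ ((p : ℝ)) * Real.exp (-(b * x)) := by
    refine setIntegral_congr_fun measurableSet_Ioi (fun x hx => ?_)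
    rw [Real.rpow_natCast]
  rw [this, h, Real.Gamma_nat_eq_factorial, show ((p:ℝ)+1) = ((p+1 : ℕ):ℝ) by push_cast; ring,
    Real.rpow_natCast]
  rw [div_pow, one_pow]
  ring

lemma myTendsto_pow_mul_exp (p : ℕ) {b : ℝ} (hb : 0 < b) :
    Tendsto (fun x : ℝ => x ^ p * Real.exp (-(b * x))) atTop (nhds 0) := by
  have h1 : Tendsto (fun x : ℝ => b * x) atTop atTop :=
    tendsto_id.const_mul_atTop hb
  have h2 := (tendsto_pow_mul_exp_neg_atTop_nhds_zero p).comp h1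
  have h3 : Tendsto (fun x : ℝ => (1 / b ^ p) * ((b * x) ^ p * Real.exp (-(b * x))))
      atTop (nhds 0) := by
    simpa using h2.const_mul (1 / b ^ p)
  refine h3.congr (fun x => ?_)
  field_simp [mul_pow]
  ring

-- expansion of (x-t)^j * (x^m * e^{-bx}) as sum
lemma myKeyExpand (t : ℝ) (m j : ℕ) (b : ℝ) :
    (fun x : ℝ => (x - t) ^ j * (x ^ m * Real.exp (-(b * x)))) =
    (fun x : ℝ => ∑ i ∈ Finset.range (j + 1),
      ((-1 : ℝ) ^ (i + j) * t ^ (j - i) * (j.choose i)) *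
        (x ^ (i + m) * Real.exp (-(b * x)))) := by
  funext x
  rw [sub_pow, Finset.sum_mul]
  refine Finset.sum_congr rfl (fun i hi => ?_)
  rw [pow_add]
  ring

lemma myIntegrableOn_K (t : ℝ) (m j : ℕ) {b : ℝ} (hb : 0 < b) :
    IntegrableOn (fun x : ℝ => (x - t) ^ j * (x ^ m * Real.exp (-(b * x)))) (Ioi 0) := by
  rw [myKeyExpand]
  exact integrable_finset_sum _ (fun i hi => (myIntegrableOn_pow_mul_exp (i + m) hb).const_mul _)

noncomputable def Kint (t : ℝ) (n j : ℕ) : ℝ :=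
  ∫ x in Ioi (0:ℝ), (x - t) ^ j * (x ^ (n - 1) * Real.exp (-(((n : ℝ) / t) * x)))

lemma myKint_rec {t : ℝ} (ht : 0 < t) {n : ℕ} (hn : 1 ≤ n) (j : ℕ) :
    ((n : ℝ) / t) * Kint t n (j + 2) =
      ((j : ℝ) + 1) * (Kint t n (j + 1) + t * Kint t n j) := by
  obtain ⟨n', rfl⟩ : ∃ n', n = n' + 1 := ⟨n - 1, by omega⟩
  set b : ℝ := ((n' + 1 : ℕ) : ℝ) / t with hbdef
  have hb : 0 < b := by positivity
  have hbt : b * t = (n' : ℝ) + 1 := by rw [hbdef, div_mul_cancel₀ _ ht.ne']; push_cast; ring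
  set u : ℝ → ℝ := fun x => (x - t) ^ (j + 1) * (x ^ (n' + 1) * Real.exp (-(b * x))) with hu
  set v : ℝ → ℝ := fun x => ((j : ℝ) + 1) * ((x - t) ^ j * (x ^ (n' + 1) * Real.exp (-(b * x))))
      - b * ((x - t) ^ (j + 2) * (x ^ n' * Real.exp (-(b * x)))) with hv
  have hder : ∀ x : ℝ, HasDerivAt u (v x) x := by
    intro x
    have h1 : HasDerivAt (fun y : ℝ => (y - t) ^ (j + 1))
        (((j:ℝ) + 1) * (x - t) ^ j * 1) x := by
      have := (hasDerivAt_pow (j + 1) (x - t)).comp x ((hasDerivAt_id x).sub_const t)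
      simpa [Function.comp_def] using this
    have h2 : HasDerivAt (fun y : ℝ => Real.exp (-(b * y)))
        (Real.exp (-(b * x)) * (-(b * 1))) x := (((hasDerivAt_id x).const_mul b).neg).exp
    have h3 : HasDerivAt (fun y : ℝ => y ^ (n' + 1)) (((n':ℝ) + 1) * x ^ n') x := by
      simpa using hasDerivAt_pow (n' + 1) x
    have h5 := h1.mul (h3.mul h2)
    refine h5.congr_deriv ?_
    simp only [hv, Pi.mul_apply]
    linear_combination (-(Real.exp (-(b * x)) * (x - t) ^ (j + 1) * x ^ n')) * hbt
  have hInt : IntegrableOn v (Ioi (0:ℝ)) volume :=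
    ((myIntegrableOn_K t (n' + 1) j hb).const_mul _).sub
      ((myIntegrableOn_K t n' (j + 2) hb).const_mul _)
  have htend : Tendsto u atTop (nhds 0) := by
    rw [hu, myKeyExpand t (n' + 1) (j + 1) b]
    have : Tendsto (fun x : ℝ => ∑ i ∈ Finset.range (j + 1 + 1),
        ((-1 : ℝ) ^ (i + (j+1)) * t ^ (j + 1 - i) * ((j+1).choose i)) *
          (x ^ (i + (n' + 1)) * Real.exp (-(b * x)))) atTop
        (nhds (∑ i ∈ Finset.range (j + 1 + 1), ((-1 : ℝ) ^ (i + (j+1)) * t ^ (j + 1 - i) * ((j+1).choose i)) * 0)) :=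
      tendsto_finset_sum _ (fun i _ => (myTendsto_pow_mul_exp (i + (n' + 1)) hb).const_mul _)
    simpa using this
  have hcont : ContinuousWithinAt u (Ici (0:ℝ)) 0 := by
    apply Continuous.continuousWithinAt
    fun_prop
  have h0 : ∫ x in Ioi (0:ℝ), v x = 0 - u 0 :=
    integral_Ioi_of_hasDerivAt_of_tendsto hcont (fun x _ => hder x) hInt htend
  have hu0 : u 0 = 0 := by simp [hu]
  -- split the integral of v
  have hIv : ∫ x in Ioi (0:ℝ), v x
      = ((j : ℝ) + 1) * (∫ x in Ioi (0:ℝ), (x - t) ^ j * (x ^ (n' + 1) * Real.exp (-(b * x))))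
        - b * Kint t (n' + 1) (j + 2) := by
    rw [hv, integral_sub ((myIntegrableOn_K t (n' + 1) j hb).const_mul _)
      ((myIntegrableOn_K t n' (j + 2) hb).const_mul _), integral_const_mul, integral_const_mul]
    rfl
  have hF : (∫ x in Ioi (0:ℝ), (x - t) ^ j * (x ^ (n' + 1) * Real.exp (-(b * x))))
      = Kint t (n' + 1) (j + 1) + t * Kint t (n' + 1) j := by
    have heq : ∀ x : ℝ, (x - t) ^ j * (x ^ (n' + 1) * Real.exp (-(b * x)))
        = (x - t) ^ (j + 1) * (x ^ n' * Real.exp (-(b * x)))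
          + t * ((x - t) ^ j * (x ^ n' * Real.exp (-(b * x)))) := by
      intro x; ring
    rw [show (fun x : ℝ => (x - t) ^ j * (x ^ (n' + 1) * Real.exp (-(b * x))))
        = fun x : ℝ => (x - t) ^ (j + 1) * (x ^ n' * Real.exp (-(b * x)))
          + t * ((x - t) ^ j * (x ^ n' * Real.exp (-(b * x)))) from funext heq,
      integral_add (myIntegrableOn_K t n' (j + 1) hb) ((myIntegrableOn_K t n' j hb).const_mul _),
      integral_const_mul]
    rfl
  rw [hIv, hu0, hF] at h0
  have : b = ((n' + 1 : ℕ) : ℝ) / t := hbdef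
  rw [show Kint t (n'+1) (j+2) = Kint t (n'+1) (j+2) from rfl] at h0
  push_cast
  push_cast at h0
  linarith

noncomputable def mom (t : ℝ) (n j : ℕ) : ℝ :=
  ∫ x, (x - t) ^ j ∂(gammaMeasure n ((n : ℝ) / t))

lemma gammaMeasure_eq_withDensity (a r : ℝ) :
    gammaMeasure a r = volume.withDensity (fun x => ((gammaPDFReal a r x).toNNReal : ℝ≥0∞)) :=
  rfl

lemma myIntegral_gamma {a r : ℝ} (ha : 0 < a) (hr : 0 < r) (g : ℝ → ℝ) :
    ∫ x, g x ∂(gammaMeasure a r) = ∫ x in Ioi (0:ℝ), gammaPDFReal a r x * g x := by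
  rw [gammaMeasure_eq_withDensity,
    integral_withDensity_eq_integral_smul ((measurable_gammaPDFReal a r).real_toNNReal) g]
  have h1 : (fun x => (gammaPDFReal a r x).toNNReal • g x)
      = fun x => gammaPDFReal a r x * g x := by
    funext x
    rw [NNReal.smul_def, Real.coe_toNNReal _ (gammaPDFReal_nonneg ha hr x), smul_eq_mul]
  rw [h1, ← integral_Ici_eq_integral_Ioi]
  refine (setIntegral_eq_integral_of_forall_compl_eq_zero (fun x hx => ?_)).symm
  have hx' : x < 0 := by simpa using hx
  simp [gammaPDFReal, not_le.mpr hx']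

lemma myIntegrable_gamma_iff {a r : ℝ} (ha : 0 < a) (hr : 0 < r) (g : ℝ → ℝ) :
    Integrable g (gammaMeasure a r) ↔
      IntegrableOn (fun x => gammaPDFReal a r x * g x) (Ioi 0) := by
  rw [gammaMeasure_eq_withDensity,
    integrable_withDensity_iff_integrable_smul ((measurable_gammaPDFReal a r).real_toNNReal)]
  have h1 : (fun x => (gammaPDFReal a r x).toNNReal • g x)
      = fun x => gammaPDFReal a r x * g x := by
    funext x
    rw [NNReal.smul_def, Real.coe_toNNReal _ (gammaPDFReal_nonneg ha hr x), smul_eq_mul]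
  rw [h1, ← integrableOn_Ici_iff_integrableOn_Ioi,
    integrableOn_iff_integrable_of_support_subset (fun x hx => ?_)]
  by_contra hx'
  have hx0 : x < 0 := by
    simp only [Set.mem_Ici, not_le] at hx'
    exact hx'
  exact hx (by simp [gammaPDFReal, not_le.mpr hx0])

lemma myPdf_on_pos {t : ℝ} (ht : 0 < t) {n : ℕ} (hn : 1 ≤ n) {x : ℝ} (hx : 0 < x) :
    gammaPDFReal n ((n : ℝ) / t) x
      = (((n : ℝ) / t) ^ ((n : ℝ)) / Real.Gamma n)
        * (x ^ (n - 1) * Real.exp (-(((n : ℝ) / t) * x))) := by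
  have hcast : ((n - 1 : ℕ) : ℝ) = (n : ℝ) - 1 := by
    push_cast [hn]; ring
  rw [gammaPDFReal, if_pos hx.le, ← hcast, Real.rpow_natCast x (n-1)]
  ring

lemma myMom_eq {t : ℝ} (ht : 0 < t) {n : ℕ} (hn : 1 ≤ n) (j : ℕ) :
    mom t n j = (((n : ℝ) / t) ^ ((n : ℝ)) / Real.Gamma n) * Kint t n j := by
  have ha : (0:ℝ) < n := by exact_mod_cast hn
  have hr : (0:ℝ) < (n : ℝ) / t := by positivity
  rw [mom, myIntegral_gamma ha hr, Kint, ← integral_const_mul]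
  refine setIntegral_congr_fun measurableSet_Ioi (fun x hx => ?_)
  rw [myPdf_on_pos ht hn hx]
  ring

lemma myMom_rec {t : ℝ} (ht : 0 < t) {n : ℕ} (hn : 1 ≤ n) (j : ℕ) :
    mom t n (j + 2) = ((j : ℝ) + 1) * (t / n) * (mom t n (j + 1) + t * mom t n j) := by
  have hn' : (0:ℝ) < n := by exact_mod_cast hn
  have h := myKint_rec ht hn j
  have hK : Kint t n (j + 2)
      = (t / (n : ℝ)) * (((j : ℝ) + 1) * (Kint t n (j + 1) + t * Kint t n j)) := by
    field_simp at h ⊢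
    linarith
  rw [myMom_eq ht hn, myMom_eq ht hn, myMom_eq ht hn, hK]
  ring

lemma myMom_zero {t : ℝ} (ht : 0 < t) {n : ℕ} (hn : 1 ≤ n) : mom t n 0 = 1 := by
  have ha : (0:ℝ) < n := by exact_mod_cast hn
  have : IsProbabilityMeasure (gammaMeasure n ((n : ℝ) / t)) :=
    isProbabilityMeasure_gammaMeasure ha (by positivity)
  simp [mom]

lemma myMom_one {t : ℝ} (ht : 0 < t) {n : ℕ} (hn : 1 ≤ n) : mom t n 1 = 0 := by
  rw [myMom_eq ht hn 1]
  obtain ⟨n', rfl⟩ : ∃ n', n = n' + 1 := ⟨n - 1, by omega⟩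
  have hr : (0:ℝ) < ((n' + 1 : ℕ) : ℝ) / t := by positivity
  have hK : Kint t (n' + 1) 1 = 0 := by
    rw [Kint]
    simp only [Nat.add_sub_cancel]
    have heq : (fun x : ℝ => (x - t) ^ 1 * (x ^ n' * Real.exp (-((((n' + 1 : ℕ) : ℝ) / t) * x))))
        = fun x : ℝ => x ^ (n' + 1) * Real.exp (-((((n' + 1 : ℕ) : ℝ) / t) * x))
          - t * (x ^ n' * Real.exp (-((((n' + 1 : ℕ) : ℝ) / t) * x))) := by
      funext x; ring
    rw [heq, integral_sub (myIntegrableOn_pow_mul_exp (n' + 1) hr)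
      ((myIntegrableOn_pow_mul_exp n' hr).const_mul t), integral_const_mul,
      myIntegral_pow_mul_exp (n' + 1) hr, myIntegral_pow_mul_exp n' hr,
      Nat.factorial_succ]
    have ht0 : t ≠ 0 := ne_of_gt ht
    have hn1 : ((n' : ℝ) + 1) ≠ 0 := by positivity
    push_cast
    rw [div_pow, div_pow]
    field_simp
    ring
  rw [hK, mul_zero]

lemma myIntegrable_gamma_of_bound {t : ℝ} (ht : 0 < t) {n : ℕ} (hn : 1 ≤ n)
    {g : ℝ → ℝ} (hgc : Continuous g) {C : ℝ} (hC : 0 ≤ C) (q : ℕ)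
    (hb : ∀ x : ℝ, 0 ≤ x → |g x| ≤ C * (1 + (x + t) ^ q)) :
    Integrable g (gammaMeasure n ((n : ℝ) / t)) := by
  have ha : (0:ℝ) < n := by exact_mod_cast hn
  have hr : (0:ℝ) < (n : ℝ) / t := by positivity
  rw [myIntegrable_gamma_iff ha hr]
  set cst : ℝ := ((n : ℝ) / t) ^ ((n : ℝ)) / Real.Gamma n with hcst
  have hcst0 : 0 ≤ cst := by
    have := Real.Gamma_pos_of_pos ha
    positivity
  have hint : IntegrableOn
      (fun x : ℝ => (1 + (x + t) ^ q) * (x ^ (n - 1) * Real.exp (-(((n : ℝ) / t) * x))))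
      (Ioi 0) := by
    have h1 := myIntegrableOn_pow_mul_exp (n - 1) hr
    have h2 := myIntegrableOn_K (-t) (n - 1) q hr
    refine IntegrableOn.congr_fun (h1.add h2) (fun x hx => ?_) measurableSet_Ioi
    simp only [Pi.add_apply, sub_neg_eq_add]
    ring
  refine Integrable.mono' ((hint.const_mul (cst * C))) ?_ ?_
  · exact (((measurable_gammaPDFReal _ _).mul hgc.measurable).aestronglyMeasurable).restrict
  · rw [ae_restrict_iff' measurableSet_Ioi]
    refine ae_of_all _ (fun x hx => ?_)
    have hx' : (0:ℝ) < x := hx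
    have hpdf0 : 0 ≤ gammaPDFReal n ((n : ℝ) / t) x := gammaPDFReal_nonneg ha hr x
    rw [Real.norm_eq_abs, abs_mul, abs_of_nonneg hpdf0]
    calc gammaPDFReal n ((n : ℝ) / t) x * |g x|
        ≤ gammaPDFReal n ((n : ℝ) / t) x * (C * (1 + (x + t) ^ q)) := by
          exact mul_le_mul_of_nonneg_left (hb x hx'.le) hpdf0
      _ = cst * C * ((1 + (x + t) ^ q) * (x ^ (n - 1) * Real.exp (-(((n : ℝ) / t) * x)))) := by
          rw [myPdf_on_pos ht hn hx']
          ring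

lemma myIntegrable_mom {t : ℝ} (ht : 0 < t) {n : ℕ} (hn : 1 ≤ n) (j : ℕ) :
    Integrable (fun x : ℝ => (x - t) ^ j) (gammaMeasure n ((n : ℝ) / t)) := by
  refine myIntegrable_gamma_of_bound ht hn (by continuity) (zero_le_one) j
    (fun x hx => ?_)
  rw [one_mul, abs_pow]
  have h1 : |x - t| ≤ x + t := abs_le.mpr ⟨by linarith, by linarith⟩
  have h2 : |x - t| ^ j ≤ (x + t) ^ j := pow_le_pow_left₀ (abs_nonneg _) h1 j
  nlinarith [pow_nonneg (by linarith : (0:ℝ) ≤ x + t) j]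


lemma myIter_comp_const_sub (f : ℝ → ℝ) (c : ℝ) (j : ℕ) :
    ∀ y : ℝ, iteratedDeriv j (fun z => f (c - z)) y = (-1) ^ j * iteratedDeriv j f (c - y) := by
  induction j with
  | zero => intro y; simp
  | succ j ih =>
    intro y
    rw [iteratedDeriv_succ, funext ih, show (fun y : ℝ => (-1:ℝ) ^ j * iteratedDeriv j f (c - y))
        = fun y : ℝ => (-1:ℝ) ^ j * (fun z => iteratedDeriv j f z) (c - y) from rfl,
      deriv_const_mul_field, deriv_comp_const_sub, iteratedDeriv_succ]
    ring

lemma myIDW_eq {f : ℝ → ℝ} {M : ℕ} (hf : ContDiff ℝ (M : ℕ) f) {s : Set ℝ}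
    (hs : UniqueDiffOn ℝ s) :
    ∀ {q : ℕ}, q ≤ M → ∀ {x : ℝ}, x ∈ s → iteratedDerivWithin q f s x = iteratedDeriv q f x := by
  intro q
  induction q with
  | zero => intro _ x hx; simp
  | succ q ih =>
    intro h x hx
    rw [iteratedDerivWithin_succ, iteratedDeriv_succ]
    have hEq : Set.EqOn (iteratedDerivWithin q f s) (iteratedDeriv q f) s :=
      fun y hy => ih (Nat.le_of_succ_le h) hy
    rw [derivWithin_congr hEq (hEq hx)]
    have hdiff : DifferentiableAt ℝ (iteratedDeriv q f) x :=
      (hf.differentiable_iteratedDeriv q (by exact_mod_cast h)) x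
    exact hdiff.derivWithin (hs.uniqueDiffWithinAt hx)

lemma myLagrange {f : ℝ → ℝ} {q : ℕ} (hf : ContDiff ℝ ((q + 1 : ℕ)) f) {t x : ℝ} (h : t < x) :
    ∃ η ∈ Ioo t x,
      f x - ∑ j ∈ Finset.range (q + 2), iteratedDeriv j f t / (j.factorial : ℝ) * (x - t) ^ j
        = (iteratedDeriv (q + 1) f η - iteratedDeriv (q + 1) f t) * (x - t) ^ (q + 1)
            / ((q + 1).factorial : ℝ) := by
  have hu : UniqueDiffOn ℝ (Icc t x) := uniqueDiffOn_Icc h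
  have hcd : ContDiffOn ℝ q f (Icc t x) :=
    (hf.of_le (by exact_mod_cast Nat.le_succ q)).contDiffOn
  have hD : Differentiable ℝ (iteratedDeriv q f) :=
    hf.differentiable_iteratedDeriv q (by exact_mod_cast Nat.lt_succ_self q)
  have hdiff : DifferentiableOn ℝ (iteratedDerivWithin q f (Icc t x)) (Ioo t x) := by
    refine (hD.differentiableOn).congr (fun y hy => ?_)
    exact myIDW_eq hf hu (Nat.le_succ q) (Ioo_subset_Icc_self hy)
  obtain ⟨η, hη, heq⟩ := taylor_mean_remainder_lagrange h.ne (by rwa [Set.uIcc_of_lt h])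
    (by rwa [Set.uIcc_of_lt h, Set.uIoo_of_lt h])
  rw [Set.uIcc_of_lt h] at heq
  rw [Set.uIoo_of_lt h] at hη
  rw [taylor_within_apply] at heq
  have ht_mem : t ∈ Icc t x := left_mem_Icc.mpr h.le
  have hsum : ∑ j ∈ Finset.range (q + 1),
      (((j.factorial : ℝ))⁻¹ * (x - t) ^ j) • iteratedDerivWithin j f (Icc t x) t
      = ∑ j ∈ Finset.range (q + 1), iteratedDeriv j f t / (j.factorial : ℝ) * (x - t) ^ j := by
    refine Finset.sum_congr rfl (fun j hj => ?_)
    rw [myIDW_eq hf hu (by have := Finset.mem_range.mp hj; omega : j ≤ q + 1) ht_mem, smul_eq_mul]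
    ring
  rw [hsum, myIDW_eq hf hu le_rfl (Ioo_subset_Icc_self hη)] at heq
  refine ⟨η, hη, ?_⟩
  rw [Finset.sum_range_succ]
  have hexp : (iteratedDeriv (q + 1) f η - iteratedDeriv (q + 1) f t) * (x - t) ^ (q + 1)
      / ((q + 1).factorial : ℝ)
      = iteratedDeriv (q + 1) f η * (x - t) ^ (q + 1) / ((q + 1).factorial : ℝ)
        - iteratedDeriv (q + 1) f t / ((q + 1).factorial : ℝ) * (x - t) ^ (q + 1) := by
    ring
  rw [hexp]
  linarith [heq]

lemma myTaylorBound {f : ℝ → ℝ} {q : ℕ} (hf : ContDiff ℝ ((q + 1 : ℕ)) f) (t : ℝ) {C : ℝ}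
    (x : ℝ)
    (hC : ∀ y : ℝ, |y - t| ≤ |x - t| →
      |iteratedDeriv (q + 1) f y - iteratedDeriv (q + 1) f t| ≤ C) :
    |f x - ∑ j ∈ Finset.range (q + 2), iteratedDeriv j f t / (j.factorial : ℝ) * (x - t) ^ j|
      ≤ C * |x - t| ^ (q + 1) / ((q + 1).factorial : ℝ) := by
  have hone : ∀ j : ℕ, ((-1 : ℝ)) ^ j * ((-1 : ℝ)) ^ j = 1 := fun j => by
    rw [← mul_pow]; norm_num
  rcases lt_trichotomy t x with h | h | h
  · obtain ⟨η, hη, heq⟩ := myLagrange hf h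
    rw [heq, abs_div, abs_mul, abs_pow, Nat.abs_cast]
    gcongr
    refine hC η ?_
    rw [abs_of_pos (by linarith [hη.1] : (0:ℝ) < η - t), abs_of_pos (by linarith : (0:ℝ) < x - t)]
    linarith [hη.2]
  · subst h
    have hsum : ∑ j ∈ Finset.range (q + 2),
        iteratedDeriv j f t / (j.factorial : ℝ) * (t - t) ^ j = f t := by
      rw [Finset.sum_eq_single 0]
      · simp
      · intro j _ hj
        rw [sub_self, zero_pow hj, mul_zero]
      · intro h; exact absurd (Finset.mem_range.mpr (by omega)) h
    rw [hsum, sub_self, abs_zero, sub_self, abs_zero, zero_pow (Nat.succ_ne_zero q),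
      mul_zero, zero_div]
  · -- x < t : reflection
    set c : ℝ := x + t with hc
    set g : ℝ → ℝ := fun z => f (c - z) with hg
    have hgc : ContDiff ℝ ((q + 1 : ℕ)) g := hf.comp (contDiff_const.sub contDiff_id)
    obtain ⟨η, hη, heq⟩ := myLagrange hgc h
    have h1 : g t = f x := by simp [hg, hc]
    have h2 : ∀ j : ℕ, iteratedDeriv j g x = (-1) ^ j * iteratedDeriv j f t := by
      intro j
      have := myIter_comp_const_sub f c j x
      rw [hg, this, show c - x = t by rw [hc]; ring]
    have h3 : iteratedDeriv (q + 1) g η = (-1) ^ (q + 1) * iteratedDeriv (q + 1) f (c - η) :=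
      myIter_comp_const_sub f c (q + 1) η
    have hs : ∑ j ∈ Finset.range (q + 2), iteratedDeriv j g x / (j.factorial : ℝ) * (t - x) ^ j
        = ∑ j ∈ Finset.range (q + 2),
            iteratedDeriv j f t / (j.factorial : ℝ) * (x - t) ^ j := by
      refine Finset.sum_congr rfl (fun j _ => ?_)
      rw [h2 j, show t - x = -(x - t) by ring, neg_pow (x - t) j,
        show (-1:ℝ) ^ j * iteratedDeriv j f t / (j.factorial : ℝ)
            * ((-1:ℝ) ^ j * (x - t) ^ j)
          = ((-1:ℝ) ^ j * (-1:ℝ) ^ j)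
            * (iteratedDeriv j f t / (j.factorial : ℝ) * (x - t) ^ j) from by ring,
        hone j, one_mul]
    rw [h1, hs, h3, h2 (q + 1)] at heq
    have hkey : ((-1:ℝ) ^ (q + 1) * iteratedDeriv (q + 1) f (c - η)
          - (-1:ℝ) ^ (q + 1) * iteratedDeriv (q + 1) f t) * (t - x) ^ (q + 1)
            / ((q + 1).factorial : ℝ)
        = (iteratedDeriv (q + 1) f (c - η) - iteratedDeriv (q + 1) f t) * (x - t) ^ (q + 1)
            / ((q + 1).factorial : ℝ) := by
      rw [show t - x = -(x - t) by ring, neg_pow (x - t) (q + 1)]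
      linear_combination ((iteratedDeriv (q + 1) f (c - η) - iteratedDeriv (q + 1) f t)
        * (x - t) ^ (q + 1) / ((q + 1).factorial : ℝ)) * hone (q + 1)
    rw [hkey] at heq
    rw [heq, abs_div, abs_mul, abs_pow, Nat.abs_cast]
    gcongr
    refine hC (c - η) ?_
    rw [show c - η - t = x - η by rw [hc]; ring,
      abs_of_neg (by linarith [hη.1] : x - η < 0), abs_of_neg (by linarith : x - t < 0)]
    linarith [hη.2]

lemma myMom_poly {t : ℝ} (ht : 0 < t) :
    ∀ j : ℕ, 1 ≤ j → ∃ p : Polynomial ℝ,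
      ∀ n : ℕ, 1 ≤ n → mom t n j = p.eval (1 / (n : ℝ)) / (n : ℝ) := by
  have key : ∀ j : ℕ,
      (∃ p : Polynomial ℝ, ∀ n : ℕ, 1 ≤ n → mom t n (j + 1) = p.eval (1 / (n : ℝ)) / (n : ℝ)) ∧
      (∃ p : Polynomial ℝ, ∀ n : ℕ, 1 ≤ n → mom t n (j + 2) = p.eval (1 / (n : ℝ)) / (n : ℝ)) := by
    intro j
    induction j with
    | zero =>
      constructor
      · exact ⟨0, fun n hn => by simp [myMom_one ht hn]⟩
      · refine ⟨Polynomial.C (t ^ 2), fun n hn => ?_⟩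
        have hn0 : ((n : ℝ)) ≠ 0 := by positivity
        rw [show (2 : ℕ) = 0 + 2 from rfl, myMom_rec ht hn 0, myMom_one ht hn,
          myMom_zero ht hn, Polynomial.eval_C]
        ring
    | succ j ih =>
      refine ⟨ih.2, ?_⟩
      obtain ⟨p1, hp1⟩ := ih.2
      obtain ⟨p2, hp2⟩ := ih.1
      refine ⟨Polynomial.C (((j : ℝ) + 2) * t) * (Polynomial.X * (p1 + Polynomial.C t * p2)),
        fun n hn => ?_⟩
      have hn0 : ((n : ℝ)) ≠ 0 := by positivity
      rw [show j + 1 + 2 = (j + 1) + 2 from rfl, myMom_rec ht hn (j + 1), hp1 n hn, hp2 n hn]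
      simp only [Polynomial.eval_mul, Polynomial.eval_add, Polynomial.eval_C, Polynomial.eval_X]
      push_cast
      ring
  intro j hj
  obtain ⟨j', rfl⟩ : ∃ j', j = j' + 1 := ⟨j - 1, by omega⟩
  exact (key j').1

lemma myMom_bound {t : ℝ} (ht : 0 < t) :
    ∀ j : ℕ, ∃ C : ℝ, 0 ≤ C ∧
      ∀ n : ℕ, 1 ≤ n → |mom t n j| ≤ C / (n : ℝ) ^ ((j + 1) / 2) := by
  have key : ∀ j : ℕ,
      (∃ C : ℝ, 0 ≤ C ∧ ∀ n : ℕ, 1 ≤ n → |mom t n j| ≤ C / (n : ℝ) ^ ((j + 1) / 2)) ∧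
      (∃ C : ℝ, 0 ≤ C ∧ ∀ n : ℕ, 1 ≤ n → |mom t n (j + 1)| ≤ C / (n : ℝ) ^ ((j + 2) / 2)) := by
    intro j
    induction j with
    | zero =>
      constructor
      · refine ⟨1, zero_le_one, fun n hn => ?_⟩
        rw [myMom_zero ht hn]
        simp
      · refine ⟨0, le_rfl, fun n hn => ?_⟩
        rw [myMom_one ht hn]
        simp
    | succ j ih =>
      refine ⟨ih.2, ?_⟩
      obtain ⟨C1, hC1, h1⟩ := ih.2
      obtain ⟨C2, hC2, h2⟩ := ih.1
      refine ⟨((j : ℝ) + 1) * t * (C1 + t * C2), by positivity, fun n hn => ?_⟩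
      have hn1 : (1 : ℝ) ≤ (n : ℝ) := by exact_mod_cast hn
      have hn0 : (0 : ℝ) < (n : ℝ) := by linarith
      have hexp : (j + 1 + 2) / 2 = (j + 1) / 2 + 1 := by omega
      have hexp2 : (j + 1) / 2 ≤ (j + 2) / 2 := by omega
      have hpowpos : (0:ℝ) < (n:ℝ) ^ ((j + 1) / 2) := by positivity
      have hpowle : ((n:ℝ)) ^ ((j + 1) / 2) ≤ (n:ℝ) ^ ((j + 2) / 2) :=
        pow_le_pow_right₀ hn1 hexp2
      have hmid : |mom t n (j + 1) + t * mom t n j|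
          ≤ C1 / (n:ℝ) ^ ((j + 1) / 2) + t * (C2 / (n:ℝ) ^ ((j + 1) / 2)) := by
        refine (abs_add_le _ _).trans (add_le_add ?_ ?_)
        · refine (h1 n hn).trans ?_
          gcongr
        · rw [abs_mul, abs_of_pos ht]
          exact mul_le_mul_of_nonneg_left (h2 n hn) ht.le
      rw [hexp, show j + 1 + 1 = j + 2 from rfl, myMom_rec ht hn j, abs_mul, abs_mul,
        abs_of_nonneg (by positivity : (0:ℝ) ≤ (j:ℝ) + 1),
        abs_of_nonneg (by positivity : (0:ℝ) ≤ t / (n:ℝ))]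
      calc ((j:ℝ) + 1) * (t / (n:ℝ)) * |mom t n (j + 1) + t * mom t n j|
          ≤ ((j:ℝ) + 1) * (t / (n:ℝ))
            * (C1 / (n:ℝ) ^ ((j + 1) / 2) + t * (C2 / (n:ℝ) ^ ((j + 1) / 2))) := by
            exact mul_le_mul_of_nonneg_left hmid (by positivity)
        _ = ((j:ℝ) + 1) * t * (C1 + t * C2) / (n:ℝ) ^ ((j + 1) / 2 + 1) := by
            rw [pow_succ]
            ring
  intro j
  exact (key j).1


set_option maxHeartbeats 1000000

/-- Expansion of the randomisation error: for `t > 0` and `f` of class `C^{2k+2}` with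
bounded `(2k+2)`-th derivative, there exist `b_1, …, b_{k+1}` such that
`n^{k+1} (∫ f dΓ(n,n/t) - f(t) - ∑_{m=1}^{k} b_m n^{-m}) → b_{k+1}` as `n → ∞`. -/
theorem gamma_randomisation_expansion (k : ℕ) (t : ℝ) (ht : 0 < t) (f : ℝ → ℝ)
    (hf : ContDiff ℝ (2 * k + 2) f)
    (hf_bdd : ∃ M : ℝ, ∀ x : ℝ, |iteratedDeriv (2 * k + 2) f x| ≤ M) :
    ∃ b : ℕ → ℝ,
      Tendsto (fun n : ℕ =>
          (n : ℝ) ^ (k + 1) *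
            ((∫ x, f x ∂(gammaMeasure n ((n : ℝ) / t))) - f t -
              ∑ m ∈ Finset.Icc 1 k, b m * (n : ℝ) ^ (-(m : ℤ))))
        atTop (nhds (b (k + 1))) := by
  obtain ⟨M, hM⟩ := hf_bdd
  have hM0 : 0 ≤ M := le_trans (abs_nonneg _) (hM t)
  set m : ℕ := 2 * k + 2 with hmdef
  have hf' : ContDiff ℝ (m : ℕ) f := by
    have : ((m : ℕ) : WithTop ℕ∞) = 2 * (k : WithTop ℕ∞) + 2 := by
      push_cast [hmdef]; ring
    rw [this]; exact hf
  have hfq : ContDiff ℝ ((2 * k + 1 + 1 : ℕ)) f := hf'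
  set D : ℝ → ℝ := iteratedDeriv m f with hD
  have hMD : ∀ x : ℝ, |D x| ≤ M := hM
  set d : ℕ → ℝ := fun j => iteratedDeriv j f t / (j.factorial : ℝ) with hd
  set r : ℝ → ℝ := fun x => f x - ∑ j ∈ Finset.range (m + 1), d j * (x - t) ^ j with hr
  -- global remainder bound
  have hrb : ∀ {C : ℝ} (x : ℝ), (∀ y : ℝ, |y - t| ≤ |x - t| → |D y - D t| ≤ C) →
      |r x| ≤ C * |x - t| ^ m / (m.factorial : ℝ) := by
    intro C x hC
    exact myTaylorBound (q := 2 * k + 1) hfq t x hC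
  have hfac1 : (1 : ℝ) ≤ (m.factorial : ℝ) := by exact_mod_cast m.factorial_pos
  have hrglob : ∀ x : ℝ, |r x| ≤ (2 * M) * |x - t| ^ m := by
    intro x
    refine le_trans (hrb (C := 2 * M) x (fun y _ => ?_)) ?_
    · exact le_trans (abs_sub _ _) (by linarith [hMD y, hMD t])
    · exact div_le_self (by positivity) hfac1
  -- integrability of the remainder and of f
  have hrcont : Continuous r := by
    rw [hr]
    refine (hf'.continuous).sub ?_
    exact continuous_finset_sum _ (fun j _ => (continuous_const.mul
      ((continuous_id.sub continuous_const).pow j)))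
  have hone_plus : ∀ x : ℝ, 0 ≤ x → ∀ j : ℕ, j ≤ m → |x - t| ^ j ≤ 1 + (x + t) ^ m := by
    intro x hx j hj
    have h1 : |x - t| ≤ x + t := abs_le.mpr ⟨by linarith, by linarith⟩
    have h2 : |x - t| ^ j ≤ (x + t) ^ j := pow_le_pow_left₀ (abs_nonneg _) h1 j
    rcases le_or_gt (x + t) 1 with h3 | h3
    · have : (x + t) ^ j ≤ 1 := pow_le_one₀ (by linarith) h3
      nlinarith [pow_nonneg (by linarith : (0:ℝ) ≤ x + t) m]
    · have : (x + t) ^ j ≤ (x + t) ^ m := pow_le_pow_right₀ h3.le hj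
      linarith
  have hInt_r : ∀ {n : ℕ}, 1 ≤ n → Integrable r (gammaMeasure n ((n : ℝ) / t)) := by
    intro n hn
    refine myIntegrable_gamma_of_bound ht hn hrcont (by linarith : (0:ℝ) ≤ 2 * M) m ?_
    intro x hx
    refine le_trans (hrglob x) ?_
    have := hone_plus x hx m le_rfl
    nlinarith
  -- moment bounds
  obtain ⟨Cm, hCm0, hCm⟩ := myMom_bound ht m
  obtain ⟨Cm2, hCm20, hCm2⟩ := myMom_bound ht (m + 2)
  have hem : (m + 1) / 2 = k + 1 := by omega
  have hem2 : (m + 2 + 1) / 2 = k + 2 := by omega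
  rw [hem] at hCm
  rw [hem2] at hCm2
  -- polynomial structure
  have hpoly := myMom_poly ht
  set p : ℕ → Polynomial ℝ := fun j =>
    if h : 1 ≤ j then Classical.choose (hpoly j h) else 0 with hp
  have hpspec : ∀ j : ℕ, 1 ≤ j → ∀ n : ℕ, 1 ≤ n →
      mom t n j = (p j).eval (1 / (n : ℝ)) / (n : ℝ) := by
    intro j hj n hn
    rw [hp]
    simp only [dif_pos hj]
    exact Classical.choose_spec (hpoly j hj) n hn
  set P : Polynomial ℝ := ∑ j ∈ Finset.range m, Polynomial.C (d (j + 1)) * p (j + 1) with hP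
  set b : ℕ → ℝ := fun i => if i = 0 then 0 else P.coeff (i - 1) with hb
  have hbk : b (k + 1) = P.coeff k := by rw [hb]; simp
  set N : ℕ := max (P.natDegree + 1) (k + 1) with hN
  have hkN : k + 1 ≤ N := le_max_right _ _
  refine ⟨b, ?_⟩
  set R : ℕ → ℝ := fun n => ∫ x, r x ∂(gammaMeasure n ((n : ℝ) / t)) with hR
  -- the key identity for n ≥ 1
  have hkey : ∀ n : ℕ, 1 ≤ n →
      (n : ℝ) ^ (k + 1) *
          ((∫ x, f x ∂(gammaMeasure n ((n : ℝ) / t))) - f t -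
            ∑ mm ∈ Finset.Icc 1 k, b mm * (n : ℝ) ^ (-(mm : ℤ)))
        = (∑ i ∈ Finset.Ico k N, P.coeff i * (1 / (n : ℝ)) ^ (i - k))
            + (n : ℝ) ^ (k + 1) * R n := by
    intro n hn
    have hn1 : (1 : ℝ) ≤ (n : ℝ) := by exact_mod_cast hn
    have hn0 : (0 : ℝ) < (n : ℝ) := by linarith
    have hnne : ((n : ℝ)) ≠ 0 := ne_of_gt hn0
    -- integral of f
    have hInt_sum : Integrable (fun x : ℝ => ∑ j ∈ Finset.range (m + 1), d j * (x - t) ^ j)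
        (gammaMeasure n ((n : ℝ) / t)) :=
      integrable_finset_sum _ (fun j _ => (myIntegrable_mom ht hn j).const_mul (d j))
    have hsplit : (∫ x, f x ∂(gammaMeasure n ((n : ℝ) / t)))
        = (∑ j ∈ Finset.range (m + 1), d j * mom t n j) + R n := by
      have : (fun x : ℝ => f x)
          = fun x => (∑ j ∈ Finset.range (m + 1), d j * (x - t) ^ j) + r x := by
        funext x; rw [hr]; ring
      rw [this, integral_add hInt_sum (hInt_r hn)]
      congr 1
      rw [integral_finset_sum _ (fun j _ => (myIntegrable_mom ht hn j).const_mul (d j))]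
      exact Finset.sum_congr rfl (fun j _ => by rw [integral_const_mul]; rfl)
    have hd0 : d 0 = f t := by rw [hd]; simp
    have hsum2 : ∑ j ∈ Finset.range (m + 1), d j * mom t n j
        = f t + P.eval (1 / (n : ℝ)) / (n : ℝ) := by
      rw [Finset.sum_range_succ']
      have h0 : d 0 * mom t n 0 = f t := by rw [hd0, myMom_zero ht hn, mul_one]
      rw [h0]
      have h1 : ∑ j ∈ Finset.range m, d (j + 1) * mom t n (j + 1)
          = P.eval (1 / (n : ℝ)) / (n : ℝ) := by
        rw [hP, Polynomial.eval_finset_sum, Finset.sum_div]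
        refine Finset.sum_congr rfl (fun j hj => ?_)
        rw [hpspec (j + 1) (by omega) n hn, Polynomial.eval_mul, Polynomial.eval_C]
        ring
      rw [h1]
      ring
    -- the b-sum
    have hbsum : ∑ mm ∈ Finset.Icc 1 k, b mm * (n : ℝ) ^ (-(mm : ℤ))
        = ∑ i ∈ Finset.range k, P.coeff i * (1 / (n : ℝ)) ^ (i + 1) := by
      rw [← Finset.Ico_add_one_right_eq_Icc, Finset.sum_Ico_eq_sum_range]
      refine Finset.sum_congr (by congr 1)  (fun i _ => ?_)
      have hb1 : b (1 + i) = P.coeff i := by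
        rw [hb]
        simp only [if_neg (by omega : ¬(1 + i = 0))]
        congr 1
        omega
      rw [hb1]
      congr 1
      rw [zpow_neg, zpow_natCast, ← inv_pow, one_div]
      congr 1
      omega
    -- eval expansion
    have heval : P.eval (1 / (n : ℝ)) / (n : ℝ)
        = ∑ i ∈ Finset.range N, P.coeff i * (1 / (n : ℝ)) ^ (i + 1) := by
      rw [Polynomial.eval_eq_sum_range' (lt_of_lt_of_le (Nat.lt_succ_self _) (le_max_left _ _)),
        Finset.sum_div]
      refine Finset.sum_congr rfl (fun i _ => ?_)
      rw [pow_succ]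
      field_simp
    have hdiff : P.eval (1 / (n : ℝ)) / (n : ℝ)
          - ∑ i ∈ Finset.range k, P.coeff i * (1 / (n : ℝ)) ^ (i + 1)
        = ∑ i ∈ Finset.Ico k N, P.coeff i * (1 / (n : ℝ)) ^ (i + 1) := by
      rw [heval, Finset.sum_Ico_eq_sub _ (by omega : k ≤ N)]
    have hcancel : ∀ i ∈ Finset.Ico k N,
        (n : ℝ) ^ (k + 1) * (P.coeff i * (1 / (n : ℝ)) ^ (i + 1))
          = P.coeff i * (1 / (n : ℝ)) ^ (i - k) := by
      intro i hi
      have hki : k ≤ i := (Finset.mem_Ico.mp hi).1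
      have : (1 / (n : ℝ)) ^ (i + 1) = (1 / (n : ℝ)) ^ (k + 1) * (1 / (n : ℝ)) ^ (i - k) := by
        rw [← pow_add]
        congr 1
        omega
      rw [this, ← mul_assoc, ← mul_comm (P.coeff i) _, mul_assoc, ← mul_assoc ((n:ℝ)^(k+1)),
        ← mul_pow, mul_one_div_cancel hnne, one_pow, one_mul]
    calc (n : ℝ) ^ (k + 1) *
          ((∫ x, f x ∂(gammaMeasure n ((n : ℝ) / t))) - f t -
            ∑ mm ∈ Finset.Icc 1 k, b mm * (n : ℝ) ^ (-(mm : ℤ)))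
        = (n : ℝ) ^ (k + 1) * (∑ i ∈ Finset.Ico k N, P.coeff i * (1 / (n : ℝ)) ^ (i + 1))
            + (n : ℝ) ^ (k + 1) * R n := by
          rw [hsplit, hsum2, hbsum, ← hdiff]; ring
      _ = (∑ i ∈ Finset.Ico k N, P.coeff i * (1 / (n : ℝ)) ^ (i - k))
            + (n : ℝ) ^ (k + 1) * R n := by
          rw [Finset.mul_sum]
          congr 1
          exact Finset.sum_congr rfl hcancel
  -- convergence of the polynomial part
  have hS : Tendsto (fun n : ℕ => ∑ i ∈ Finset.Ico k N, P.coeff i * (1 / (n : ℝ)) ^ (i - k))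
      atTop (nhds (P.coeff k)) := by
    have hsplit : ∀ n : ℕ, ∑ i ∈ Finset.Ico k N, P.coeff i * (1 / (n : ℝ)) ^ (i - k)
        = P.coeff k + ∑ i ∈ Finset.Ico (k + 1) N, P.coeff i * (1 / (n : ℝ)) ^ (i - k) := by
      intro n
      rw [Finset.sum_eq_sum_Ico_succ_bot (by omega : k < N)]
      simp
    simp_rw [hsplit]
    have htail : Tendsto (fun n : ℕ => ∑ i ∈ Finset.Ico (k + 1) N,
        P.coeff i * (1 / (n : ℝ)) ^ (i - k)) atTop (nhds 0) := by
      have : Tendsto (fun n : ℕ => ∑ i ∈ Finset.Ico (k + 1) N,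
          P.coeff i * (1 / (n : ℝ)) ^ (i - k)) atTop
          (nhds (∑ i ∈ Finset.Ico (k + 1) N, P.coeff i * 0)) := by
        refine tendsto_finset_sum _ (fun i hi => ?_)
        have hik : i - k ≠ 0 := by
          have := (Finset.mem_Ico.mp hi).1; omega
        have h1 : Tendsto (fun n : ℕ => (1 / (n : ℝ)) ^ (i - k)) atTop (nhds 0) := by
          have := (tendsto_one_div_atTop_nhds_zero_nat : Tendsto (fun n : ℕ => 1 / (n : ℝ)) atTop (nhds 0)).pow (i - k)
          rwa [zero_pow hik] at this
        simpa using h1.const_mul (P.coeff i)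
      simpa using this
    simpa using (tendsto_const_nhds (x := P.coeff k)).add htail
  -- convergence of the remainder part
  have hB : Tendsto (fun n : ℕ => (n : ℝ) ^ (k + 1) * R n) atTop (nhds 0) := by
    rw [Metric.tendsto_atTop]
    intro ε hε
    set ε₀ : ℝ := ε / (2 * (Cm + 1)) with hε₀
    have hε₀pos : 0 < ε₀ := by positivity
    -- continuity of D at t
    have hDcont : ContinuousAt D t := ((hf'.continuous_iteratedDeriv m le_rfl)).continuousAt
    obtain ⟨δ, hδpos, hδ⟩ := Metric.continuousAt_iff.mp hDcont ε₀ hε₀pos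
    set δ' : ℝ := δ / 2 with hδ'
    have hδ'pos : 0 < δ' := by positivity
    set KK : ℝ := 2 * M / δ' ^ 2 with hKK
    have hKK0 : 0 ≤ KK := by positivity
    have hmeven : Even m := by exact ⟨k + 1, by omega⟩
    have habs_pow : ∀ x : ℝ, |x - t| ^ m = (x - t) ^ m := fun x => hmeven.pow_abs _
    have habs_pow2 : ∀ x : ℝ, |x - t| ^ (m + 2) = (x - t) ^ (m + 2) :=
      fun x => (by exact ⟨k + 2, by omega⟩ : Even (m + 2)).pow_abs _
    -- pointwise bound on r
    have hpt : ∀ x : ℝ, |r x| ≤ ε₀ * (x - t) ^ m + KK * (x - t) ^ (m + 2) := by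
      intro x
      have hxm : (0:ℝ) ≤ (x - t) ^ m := by rw [← habs_pow]; positivity
      have hxm2 : (0:ℝ) ≤ (x - t) ^ (m + 2) := by rw [← habs_pow2]; positivity
      rcases le_or_gt |x - t| δ' with hclose | hfar
      · have h1 : |r x| ≤ ε₀ * |x - t| ^ m / (m.factorial : ℝ) := by
          refine hrb x (fun y hy => ?_)
          have : dist y t < δ := by
            rw [Real.dist_eq]
            calc |y - t| ≤ |x - t| := hy
              _ ≤ δ' := hclose
              _ < δ := by rw [hδ']; linarith
          exact le_of_lt (by simpa [Real.dist_eq, hD] using hδ this)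
        refine le_trans h1 ?_
        rw [habs_pow]
        have : ε₀ * (x - t) ^ m / (m.factorial : ℝ) ≤ ε₀ * (x - t) ^ m := by
          apply div_le_self (by positivity) hfac1
        nlinarith
      · have h1 : |r x| ≤ 2 * M * |x - t| ^ m := hrglob x
        have h2 : (x - t) ^ m * δ' ^ 2 ≤ (x - t) ^ (m + 2) := by
          have : (x - t) ^ (m + 2) = (x - t) ^ m * (x - t) ^ 2 := by ring
          rw [this]
          have hsq : δ' ^ 2 ≤ (x - t) ^ 2 := by
            rw [← sq_abs (x - t)]
            nlinarith [abs_nonneg (x - t)]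
          nlinarith
        have h3 : 2 * M * (x - t) ^ m ≤ KK * (x - t) ^ (m + 2) := by
          rw [hKK, div_mul_eq_mul_div, le_div_iff₀ (by positivity)]
          nlinarith
        rw [habs_pow] at h1
        nlinarith
    -- integral bound for n ≥ 1
    have hRb : ∀ n : ℕ, 1 ≤ n → |R n| ≤ ε₀ * mom t n m + KK * mom t n (m + 2) := by
      intro n hn
      have hIb : Integrable (fun x : ℝ => ε₀ * (x - t) ^ m + KK * (x - t) ^ (m + 2))
          (gammaMeasure n ((n : ℝ) / t)) :=
        ((myIntegrable_mom ht hn m).const_mul ε₀).add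
          ((myIntegrable_mom ht hn (m + 2)).const_mul KK)
      have := norm_integral_le_of_norm_le hIb (ae_of_all _ (fun x => by
        rw [Real.norm_eq_abs]; exact hpt x))
      rw [hR]
      refine le_trans this ?_
      rw [integral_add ((myIntegrable_mom ht hn m).const_mul ε₀)
        ((myIntegrable_mom ht hn (m + 2)).const_mul KK), integral_const_mul, integral_const_mul]
      exact le_refl _
    -- choose N₀
    have htail : Tendsto (fun n : ℕ => KK * Cm2 * (1 / (n : ℝ))) atTop (nhds 0) := by
      simpa using tendsto_one_div_atTop_nhds_zero_nat.const_mul (KK * Cm2)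
    have hev : ∀ᶠ n : ℕ in atTop, KK * Cm2 * (1 / (n : ℝ)) < ε / 2 :=
      htail.eventually (eventually_lt_nhds (by positivity))
    obtain ⟨N₁, hN₁⟩ := (eventually_atTop).mp hev
    refine ⟨max N₁ 1, fun n hn => ?_⟩
    have hn1 : 1 ≤ n := le_trans (le_max_right _ _) hn
    have hnN₁ : N₁ ≤ n := le_trans (le_max_left _ _) hn
    have hnr1 : (1:ℝ) ≤ (n:ℝ) := by exact_mod_cast hn1
    have hnr0 : (0:ℝ) < (n:ℝ) := by linarith
    rw [Real.dist_eq, sub_zero]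
    have h1 : |(n : ℝ) ^ (k + 1) * R n| = (n : ℝ) ^ (k + 1) * |R n| := by
      rw [abs_mul, abs_of_nonneg (by positivity)]
    rw [h1]
    have h2 : (n : ℝ) ^ (k + 1) * |R n|
        ≤ (n : ℝ) ^ (k + 1) * (ε₀ * (Cm / (n:ℝ) ^ (k + 1)) + KK * (Cm2 / (n:ℝ) ^ (k + 2))) := by
      refine mul_le_mul_of_nonneg_left ?_ (by positivity)
      refine le_trans (hRb n hn1) ?_
      have e1 : ε₀ * mom t n m ≤ ε₀ * (Cm / (n:ℝ) ^ (k + 1)) :=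
        mul_le_mul_of_nonneg_left (le_trans (le_abs_self _) (hCm n hn1)) hε₀pos.le
      have e2 : KK * mom t n (m + 2) ≤ KK * (Cm2 / (n:ℝ) ^ (k + 2)) :=
        mul_le_mul_of_nonneg_left (le_trans (le_abs_self _) (hCm2 n hn1)) hKK0
      linarith
    have h3 : (n : ℝ) ^ (k + 1) * (ε₀ * (Cm / (n:ℝ) ^ (k + 1)) + KK * (Cm2 / (n:ℝ) ^ (k + 2)))
        = ε₀ * Cm + KK * Cm2 * (1 / (n : ℝ)) := by
      have hpne : ((n:ℝ)) ^ (k + 1) ≠ 0 := by positivity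
      field_simp
      ring
    have h4 : ε₀ * Cm < ε / 2 := by
      rw [hε₀]
      rw [div_mul_eq_mul_div, div_lt_iff₀ (by positivity)]
      nlinarith
    have h5 := hN₁ n hnN₁
    calc (n : ℝ) ^ (k + 1) * |R n| ≤ _ := h2
      _ = ε₀ * Cm + KK * Cm2 * (1 / (n : ℝ)) := h3
      _ < ε / 2 + ε / 2 := by linarith
      _ = ε := by ring
  -- combine
  rw [hbk]
  have hcomb := hS.add hB
  rw [add_zero] at hcomb
  refine Tendsto.congr' ?_ hcomb
  filter_upwards [eventually_ge_atTop 1] with n hn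
  exact (hkey n hn).symm
end

section
/- Let t > 0 and let f : ℝ → ℝ be four times continuously differentiable with bounded fourth derivative. Then lim_{n→∞} n² · ( ∫ f(x) dΓ(n, n/t)(x) − f(t) − (t²/(2n)) f''(t) ) = (t⁴/8) f⁽⁴⁾(t) + (t³/3) f⁽³⁾(t). -/
open MeasureTheory ProbabilityTheory Filter

set_option maxHeartbeats 4000000

open scoped Nat

namespace GammaRandomisationAux

open Real Set
open scoped NNReal ENNReal

/-! ### Gamma function product formula -/

lemma Gamma_add_nat {a : ℝ} (ha : 0 < a) (k : ℕ) :
    Real.Gamma (a + k) = (∏ i ∈ Finset.range k, (a + i)) * Real.Gamma a := by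
  induction k with
  | zero => simp
  | succ k ih =>
    have h0 : a + (k : ℝ) ≠ 0 := by positivity
    have h1 : a + ((k + 1 : ℕ) : ℝ) = (a + k) + 1 := by push_cast; ring
    rw [h1, Real.Gamma_add_one h0, ih, Finset.prod_range_succ]
    ring

/-! ### Pointwise identity for the pdf times a power -/

lemma pdf_mul_pow {a r : ℝ} (ha : 0 < a) (hr : 0 < r) (k : ℕ) (x : ℝ) :
    gammaPDFReal a r x * x ^ k
      = ((∏ i ∈ Finset.range k, (a + i)) / r ^ k) * gammaPDFReal (a + k) r x := by
  rcases lt_trichotomy x 0 with hx | rfl | hx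
  · simp [gammaPDFReal, if_neg (not_le.mpr hx)]
  · rcases Nat.eq_zero_or_pos k with rfl | hk
    · simp [gammaPDFReal]
    · have h1 : (0 : ℝ) ^ k = 0 := zero_pow (by omega)
      have h2 : (0 : ℝ) ^ (a + (k : ℝ) - 1) = 0 := by
        rw [Real.zero_rpow]
        have : (1 : ℝ) ≤ (k : ℝ) := by exact_mod_cast hk
        intro h; nlinarith
      simp [gammaPDFReal, h1, h2]
  · unfold gammaPDFReal
    rw [if_pos hx.le, if_pos hx.le]
    have hΓ := Gamma_add_nat ha k
    have hP : 0 < ∏ i ∈ Finset.range k, (a + (i : ℝ)) :=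
      Finset.prod_pos fun i _ => by positivity
    have hx1 : x ^ (a + (k : ℝ) - 1) = x ^ (a - 1) * x ^ k := by
      rw [← Real.rpow_natCast x k, ← Real.rpow_add hx]
      congr 1; ring
    have hr1 : r ^ (a + (k : ℝ)) = r ^ a * r ^ k := by
      rw [← Real.rpow_natCast r k, ← Real.rpow_add hr]
    rw [hΓ, hx1, hr1]
    have hΓa : Real.Gamma a ≠ 0 := (Real.Gamma_pos_of_pos ha).ne'
    have hra : (0 : ℝ) < r ^ a := Real.rpow_pos_of_pos hr a
    have hrk : (r : ℝ) ^ k ≠ 0 := by positivity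
    field_simp

/-! ### Integrability and integral of the real pdf -/

lemma integrable_gammaPDFReal {a r : ℝ} (ha : 0 < a) (hr : 0 < r) :
    Integrable (gammaPDFReal a r) := by
  refine ⟨(measurable_gammaPDFReal a r).aestronglyMeasurable, ?_⟩
  rw [hasFiniteIntegral_iff_ofReal (ae_of_all _ (gammaPDFReal_nonneg ha hr))]
  have h : (∫⁻ x, ENNReal.ofReal (gammaPDFReal a r x)) = 1 :=
    lintegral_gammaPDF_eq_one ha hr
  rw [h]
  exact ENNReal.one_lt_top

lemma integral_gammaPDFReal {a r : ℝ} (ha : 0 < a) (hr : 0 < r) :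
    ∫ x, gammaPDFReal a r x = 1 := by
  rw [integral_eq_lintegral_of_nonneg_ae (ae_of_all _ (gammaPDFReal_nonneg ha hr))
    (measurable_gammaPDFReal a r).aestronglyMeasurable]
  have h : (∫⁻ x, ENNReal.ofReal (gammaPDFReal a r x)) = 1 :=
    lintegral_gammaPDF_eq_one ha hr
  rw [h]
  simp

/-! ### Transfer between `gammaMeasure` and Lebesgue integrals -/

lemma integral_gammaMeasure_eq {a r : ℝ} (ha : 0 < a) (hr : 0 < r) (g : ℝ → ℝ) :
    ∫ x, g x ∂(gammaMeasure a r) = ∫ x, gammaPDFReal a r x * g x := by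
  rw [gammaMeasure]
  have h : gammaPDF a r
      = fun x => ((Real.toNNReal (gammaPDFReal a r x) : ℝ≥0) : ℝ≥0∞) := rfl
  rw [h, integral_withDensity_eq_integral_smul (measurable_gammaPDFReal a r).real_toNNReal]
  congr 1
  ext x
  simp [NNReal.smul_def, Real.coe_toNNReal _ (gammaPDFReal_nonneg ha hr x)]

lemma integrable_gammaMeasure_iff {a r : ℝ} (ha : 0 < a) (hr : 0 < r) (g : ℝ → ℝ) :
    Integrable g (gammaMeasure a r)
      ↔ Integrable (fun x => gammaPDFReal a r x * g x) := by
  rw [gammaMeasure]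
  have h : gammaPDF a r
      = fun x => ((Real.toNNReal (gammaPDFReal a r x) : ℝ≥0) : ℝ≥0∞) := rfl
  rw [h, integrable_withDensity_iff_integrable_smul
    (measurable_gammaPDFReal a r).real_toNNReal]
  refine integrable_congr (ae_of_all _ fun x => ?_)
  simp [NNReal.smul_def, Real.coe_toNNReal _ (gammaPDFReal_nonneg ha hr x)]

/-! ### Moments -/

lemma integrable_pow_gammaMeasure {a r : ℝ} (ha : 0 < a) (hr : 0 < r) (k : ℕ) :
    Integrable (fun x => x ^ k) (gammaMeasure a r) := by
  rw [integrable_gammaMeasure_iff ha hr]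
  have h : (fun x => gammaPDFReal a r x * x ^ k)
      = fun x => ((∏ i ∈ Finset.range k, (a + i)) / r ^ k) * gammaPDFReal (a + k) r x :=
    funext (pdf_mul_pow ha hr k)
  rw [h]
  exact (integrable_gammaPDFReal (by positivity) hr).const_mul _

lemma integral_pow_gammaMeasure {a r : ℝ} (ha : 0 < a) (hr : 0 < r) (k : ℕ) :
    ∫ x, x ^ k ∂(gammaMeasure a r) = (∏ i ∈ Finset.range k, (a + i)) / r ^ k := by
  rw [integral_gammaMeasure_eq ha hr]
  simp_rw [pdf_mul_pow ha hr k]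
  rw [integral_const_mul, integral_gammaPDFReal (by positivity) hr, mul_one]

lemma centered_eq (t : ℝ) (k : ℕ) : (fun x : ℝ => (x - t) ^ k)
    = fun x => ∑ j ∈ Finset.range (k + 1),
        x ^ j * ((-t) ^ (k - j) * (k.choose j : ℝ)) := by
  funext x
  rw [sub_eq_add_neg, add_pow]
  simp_rw [mul_assoc]

lemma integrable_centered {a r : ℝ} (ha : 0 < a) (hr : 0 < r) (t : ℝ) (k : ℕ) :
    Integrable (fun x => (x - t) ^ k) (gammaMeasure a r) := by
  rw [centered_eq t k]
  exact integrable_finset_sum _ fun j _ => (integrable_pow_gammaMeasure ha hr j).mul_const _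

lemma integral_centered {a r : ℝ} (ha : 0 < a) (hr : 0 < r) (t : ℝ) (k : ℕ) :
    ∫ x, (x - t) ^ k ∂(gammaMeasure a r)
      = ∑ j ∈ Finset.range (k + 1),
          (∏ i ∈ Finset.range j, (a + i)) / r ^ j * ((-t) ^ (k - j) * (k.choose j : ℝ)) := by
  rw [centered_eq t k,
    integral_finset_sum _ fun j _ => (integrable_pow_gammaMeasure ha hr j).mul_const _]
  refine Finset.sum_congr rfl fun j _ => ?_
  rw [integral_mul_const, integral_pow_gammaMeasure ha hr j]

/-! ### Explicit central moments for shape `n`, rate `n / t` -/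

variable {t : ℝ} {n : ℕ}

lemma moment0 (ht : 0 < t) (hn : 0 < n) :
    ∫ x, (x - t) ^ 0 ∂(gammaMeasure n ((n : ℝ) / t)) = 1 := by
  have hn' : (0 : ℝ) < n := by exact_mod_cast hn
  rw [integral_centered hn' (by positivity) t 0]
  norm_num

lemma moment1 (ht : 0 < t) (hn : 0 < n) :
    ∫ x, (x - t) ^ 1 ∂(gammaMeasure n ((n : ℝ) / t)) = 0 := by
  have hn' : (0 : ℝ) < n := by exact_mod_cast hn
  rw [integral_centered hn' (by positivity) t 1]
  simp [Finset.sum_range_succ, Finset.prod_range_succ]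
  field_simp
  ring

lemma moment2 (ht : 0 < t) (hn : 0 < n) :
    ∫ x, (x - t) ^ 2 ∂(gammaMeasure n ((n : ℝ) / t)) = t ^ 2 / n := by
  have hn' : (0 : ℝ) < n := by exact_mod_cast hn
  rw [integral_centered hn' (by positivity) t 2]
  norm_num [Finset.sum_range_succ, Finset.prod_range_succ]
  field_simp
  ring

lemma moment3 (ht : 0 < t) (hn : 0 < n) :
    ∫ x, (x - t) ^ 3 ∂(gammaMeasure n ((n : ℝ) / t)) = 2 * t ^ 3 / n ^ 2 := by
  have hn' : (0 : ℝ) < n := by exact_mod_cast hn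
  rw [integral_centered hn' (by positivity) t 3]
  norm_num [Finset.sum_range_succ, Finset.prod_range_succ]
  field_simp
  ring

lemma moment4 (ht : 0 < t) (hn : 0 < n) :
    ∫ x, (x - t) ^ 4 ∂(gammaMeasure n ((n : ℝ) / t))
      = 3 * t ^ 4 / n ^ 2 + 6 * t ^ 4 / n ^ 3 := by
  have hn' : (0 : ℝ) < n := by exact_mod_cast hn
  rw [integral_centered hn' (by positivity) t 4]
  norm_num [Finset.sum_range_succ, Finset.prod_range_succ,
    show Nat.choose 4 2 = 6 from by decide]
  field_simp
  ring

lemma moment6 (ht : 0 < t) (hn : 0 < n) :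
    ∫ x, (x - t) ^ 6 ∂(gammaMeasure n ((n : ℝ) / t))
      = 15 * t ^ 6 / n ^ 3 + 130 * t ^ 6 / n ^ 4 + 120 * t ^ 6 / n ^ 5 := by
  have hn' : (0 : ℝ) < n := by exact_mod_cast hn
  rw [integral_centered hn' (by positivity) t 6]
  norm_num [Finset.sum_range_succ, Finset.prod_range_succ,
    show Nat.choose 6 2 = 15 from by decide, show Nat.choose 6 3 = 20 from by decide,
    show Nat.choose 6 4 = 15 from by decide]
  field_simp
  ring

/-! ### Taylor expansion with Lagrange remainder, both sides -/

lemma idw_eq {m : ℕ} {s : Set ℝ} (hs : UniqueDiffOn ℝ s) {g : ℝ → ℝ}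
    (hg : ContDiff ℝ 4 g) (hm : m ≤ 4) {x : ℝ} (hx : x ∈ s) :
    iteratedDerivWithin m g s x = iteratedDeriv m g x := by
  have hg' : ContDiff ℝ ((4 : ℕ∞) : WithTop ℕ∞) g := by exact_mod_cast hg
  have H : HasFTaylorSeriesUpTo (4 : ℕ∞) g (ftaylorSeries ℝ g) :=
    contDiff_iff_ftaylorSeries.mp hg'
  rw [iteratedDerivWithin_eq_iteratedFDerivWithin, iteratedDeriv_eq_iteratedFDeriv,
    ← (H.hasFTaylorSeriesUpToOn s).eq_iteratedFDerivWithin_of_uniqueDiffOn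
      (by exact_mod_cast hm) hs hx]
  rfl

lemma lagrange4 {F : ℝ → ℝ} (hF : ContDiff ℝ 4 F) {a b : ℝ} (hab : a < b) :
    ∃ ξ ∈ Set.Ioo a b,
      F b - ∑ k ∈ Finset.range 4, ((k ! : ℝ)⁻¹ * (b - a) ^ k) * iteratedDeriv k F a
        = iteratedDeriv 4 F ξ * (b - a) ^ 4 / 24 := by
  have hu : UniqueDiffOn ℝ (Set.Icc a b) := uniqueDiffOn_Icc hab
  have h34 : ((3 : ℕ) : WithTop ℕ∞) < 4 := by exact_mod_cast (by norm_num : (3:ℕ) < 4)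
  have h1 : ContDiffOn ℝ 3 F (Set.Icc a b) := (hF.of_le h34.le).contDiffOn
  have hdiff : DifferentiableOn ℝ (iteratedDerivWithin 3 F (Set.Icc a b)) (Set.Ioo a b) := by
    refine DifferentiableOn.congr
      ((hF.differentiable_iteratedDeriv 3 h34).differentiableOn) fun y hy => ?_
    exact idw_eq hu hF (by norm_num) (Set.Ioo_subset_Icc_self hy)
  obtain ⟨ξ, hξ, hE⟩ := taylor_mean_remainder_lagrange (n := 3) hab.ne
    (by rw [Set.uIcc_of_le hab.le]; exact h1)
    (by rw [Set.uIcc_of_le hab.le, Set.uIoo_of_le hab.le]; exact hdiff)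
  rw [Set.uIoo_of_le hab.le] at hξ
  rw [Set.uIcc_of_le hab.le] at hE
  refine ⟨ξ, hξ, ?_⟩
  rw [taylor_within_apply] at hE
  have e4 : iteratedDerivWithin (3 + 1) F (Set.Icc a b) ξ = iteratedDeriv 4 F ξ :=
    idw_eq hu hF (by norm_num) (Set.Ioo_subset_Icc_self hξ)
  rw [e4] at hE
  have hsum : ∑ k ∈ Finset.range (3 + 1),
        ((k ! : ℝ)⁻¹ * (b - a) ^ k) • iteratedDerivWithin k F (Set.Icc a b) a
      = ∑ k ∈ Finset.range 4, ((k ! : ℝ)⁻¹ * (b - a) ^ k) * iteratedDeriv k F a := by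
    refine Finset.sum_congr rfl fun k hk => ?_
    rw [smul_eq_mul, idw_eq hu hF (by
      have := Finset.mem_range.mp hk; omega) (Set.left_mem_Icc.mpr hab.le)]
  rw [hsum] at hE
  rw [hE]
  norm_num [Nat.factorial]

lemma taylor_est {f : ℝ → ℝ} (hf : ContDiff ℝ 4 f) (t : ℝ) (x : ℝ) :
    ∃ ξ : ℝ, |ξ - t| ≤ |x - t| ∧
      f x - ∑ k ∈ Finset.range 4, ((k ! : ℝ)⁻¹ * (x - t) ^ k) * iteratedDeriv k f t
        = iteratedDeriv 4 f ξ * (x - t) ^ 4 / 24 := by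
  rcases lt_trichotomy t x with hlt | rfl | hlt
  · obtain ⟨ξ, hξ, h⟩ := lagrange4 hf hlt
    refine ⟨ξ, ?_, h⟩
    rw [abs_of_nonneg (by linarith [hξ.1] : (0:ℝ) ≤ ξ - t),
      abs_of_nonneg (by linarith : (0:ℝ) ≤ x - t)]
    linarith [hξ.2]
  · exact ⟨t, by simp, by simp [Finset.sum_range_succ, iteratedDeriv_zero]⟩
  · -- x < t : reflect
    set g : ℝ → ℝ := fun y => f (2 * t - y) with hg_def
    have hg : ContDiff ℝ 4 g := hf.comp (contDiff_const.sub contDiff_id)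
    have hD : ∀ (k : ℕ) (y : ℝ),
        iteratedDeriv k g y = (-1 : ℝ) ^ k * iteratedDeriv k f (2 * t - y) := by
      intro k y
      have h1 : g = fun y => (fun z => f (2 * t + z)) (-y) := by
        funext u; simp [hg_def, sub_eq_add_neg]
      rw [h1, iteratedDeriv_comp_neg k (fun z => f (2 * t + z)) y,
        iteratedDeriv_comp_const_add k f (2 * t)]
      rw [smul_eq_mul, sub_eq_add_neg]
    have hab : t < 2 * t - x := by linarith
    obtain ⟨ξ', hξ', h⟩ := lagrange4 hg hab
    refine ⟨2 * t - ξ', ?_, ?_⟩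
    · rw [abs_le]
      have h1 := hξ'.1
      have h2 := hξ'.2
      constructor
      · calc -|x - t| ≤ -(t - x) := by
              rw [abs_of_nonpos (by linarith : x - t ≤ 0)]; linarith
          _ ≤ 2 * t - ξ' - t := by linarith
      · calc 2 * t - ξ' - t ≤ 0 := by linarith
          _ ≤ |x - t| := abs_nonneg _
    · have hgb : g (2 * t - x) = f x := by simp [hg_def]
      have hsum : ∑ k ∈ Finset.range 4,
            ((k ! : ℝ)⁻¹ * (2 * t - x - t) ^ k) * iteratedDeriv k g t
          = ∑ k ∈ Finset.range 4, ((k ! : ℝ)⁻¹ * (x - t) ^ k) * iteratedDeriv k f t := by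
        refine Finset.sum_congr rfl fun k _ => ?_
        rw [hD k t, show (2 : ℝ) * t - t = t by ring,
          show (2 : ℝ) * t - x - t = t - x by ring,
          show (x - t : ℝ) = (-1) * (t - x) by ring, mul_pow]
        ring
      rw [hgb, hsum, hD 4 ξ'] at h
      rw [h]
      rw [show (2 : ℝ) * t - x - t = t - x by ring,
        show (x - t : ℝ) = (-1) * (t - x) by ring, mul_pow]
      norm_num

lemma remainder_bound {f : ℝ → ℝ} (hf : ContDiff ℝ 4 f) (t : ℝ) {M : ℝ}
    (hM : ∀ x, |iteratedDeriv 4 f x| ≤ M) {δ ε : ℝ} (hδ : 0 < δ)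
    (hε : ∀ y, |y - t| ≤ δ → |iteratedDeriv 4 f y - iteratedDeriv 4 f t| ≤ ε) (x : ℝ) :
    |f x - ∑ k ∈ Finset.range 5, ((k ! : ℝ)⁻¹ * (x - t) ^ k) * iteratedDeriv k f t|
      ≤ ε / 24 * (x - t) ^ 4 + 2 * M / (24 * δ ^ 2) * (x - t) ^ 6 := by
  obtain ⟨ξ, hξ, hT⟩ := taylor_est hf t x
  have hM0 : 0 ≤ M := le_trans (abs_nonneg _) (hM t)
  have hε0 : 0 ≤ ε := le_trans (abs_nonneg _) (hε t (by simp [hδ.le]))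
  have hsplit : f x - ∑ k ∈ Finset.range 5, ((k ! : ℝ)⁻¹ * (x - t) ^ k) * iteratedDeriv k f t
      = (iteratedDeriv 4 f ξ - iteratedDeriv 4 f t) * (x - t) ^ 4 / 24 := by
    rw [Finset.sum_range_succ]
    have h24 : ((4 ! : ℕ) : ℝ) = 24 := by norm_num [Nat.factorial]
    rw [h24]
    linear_combination hT
  rw [hsplit]
  have habs : |(iteratedDeriv 4 f ξ - iteratedDeriv 4 f t) * (x - t) ^ 4 / 24|
      = |iteratedDeriv 4 f ξ - iteratedDeriv 4 f t| * (x - t) ^ 4 / 24 := by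
    rw [abs_div, abs_mul, abs_of_nonneg (by positivity : (0:ℝ) ≤ (x - t) ^ 4)]
    norm_num
  rw [habs]
  rcases le_or_gt |x - t| δ with hc | hc
  · have h1 : |iteratedDeriv 4 f ξ - iteratedDeriv 4 f t| ≤ ε := hε ξ (le_trans hξ hc)
    have h2 : (0:ℝ) ≤ (x - t) ^ 4 := by positivity
    have h3 : (0:ℝ) ≤ 2 * M / (24 * δ ^ 2) * (x - t) ^ 6 := by positivity
    nlinarith
  · have h1 : |iteratedDeriv 4 f ξ - iteratedDeriv 4 f t| ≤ 2 * M := by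
      calc |iteratedDeriv 4 f ξ - iteratedDeriv 4 f t|
          ≤ |iteratedDeriv 4 f ξ| + |iteratedDeriv 4 f t| := abs_sub _ _
        _ ≤ 2 * M := by linarith [hM ξ, hM t]
    have h2 : δ ^ 2 ≤ (x - t) ^ 2 := by
      have := abs_nonneg (x - t)
      nlinarith [sq_abs (x - t)]
    have h3 : (x - t) ^ 4 * δ ^ 2 ≤ (x - t) ^ 6 := by nlinarith [sq_nonneg ((x-t)^2)]
    have h4 : (0:ℝ) ≤ (x - t) ^ 4 := by positivity
    have h5 : (0:ℝ) ≤ ε / 24 * (x - t) ^ 4 := by positivity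
    have hδ2 : (0:ℝ) < δ ^ 2 := by positivity
    have k1 : |iteratedDeriv 4 f ξ - iteratedDeriv 4 f t| * (x - t) ^ 4 / 24
        ≤ 2 * M * (x - t) ^ 4 / 24 := by gcongr
    have k2 : 2 * M * (x - t) ^ 4 / 24 ≤ 2 * M / (24 * δ ^ 2) * (x - t) ^ 6 := by
      rw [div_mul_eq_mul_div, div_le_div_iff₀ (by norm_num) (by positivity)]
      nlinarith [mul_le_mul_of_nonneg_left h3 (by positivity : (0:ℝ) ≤ 2 * M)]
    linarith

end GammaRandomisationAux

open GammaRandomisationAux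

/-- Second-order randomisation error: for `t > 0` and `f` of class `C⁴` with bounded fourth
derivative,
`n² (∫ f dΓ(n,n/t) - f(t) - (t²/(2n)) f''(t)) → (t⁴/8) f⁽⁴⁾(t) + (t³/3) f⁽³⁾(t)`. -/
theorem gamma_randomisation_second_order (t : ℝ) (ht : 0 < t) (f : ℝ → ℝ)
    (hf : ContDiff ℝ 4 f)
    (hf_bdd : ∃ M : ℝ, ∀ x : ℝ, |iteratedDeriv 4 f x| ≤ M) :
    Tendsto (fun n : ℕ =>
        (n : ℝ) ^ 2 *
          ((∫ x, f x ∂(gammaMeasure n ((n : ℝ) / t))) - f t -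
            t ^ 2 / (2 * n) * iteratedDeriv 2 f t))
      atTop
      (nhds (t ^ 4 / 8 * iteratedDeriv 4 f t + t ^ 3 / 3 * iteratedDeriv 3 f t)) := by
  obtain ⟨M, hM⟩ := hf_bdd
  have hM0 : 0 ≤ M := le_trans (abs_nonneg _) (hM t)
  set c : ℕ → ℝ := fun k => iteratedDeriv k f t with hc
  set P : ℝ → ℝ := fun x => ∑ k ∈ Finset.range 5, ((k ! : ℝ)⁻¹ * (x - t) ^ k) * c k with hP
  set R : ℝ → ℝ := fun x => f x - P x with hR
  have hPcont : Continuous P := by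
    apply continuous_finset_sum
    intro k _
    fun_prop
  have hRcont : Continuous R := hf.continuous.sub hPcont
  -- global remainder bound (δ = 1, ε = 2M)
  have hglob : ∀ x, |R x| ≤ 2 * M / 24 * (x - t) ^ 4 + 2 * M / (24 * 1 ^ 2) * (x - t) ^ 6 := by
    intro x
    have h := remainder_bound hf t hM (by norm_num : (0:ℝ) < 1)
      (fun y _ => by
        calc |iteratedDeriv 4 f y - iteratedDeriv 4 f t|
            ≤ |iteratedDeriv 4 f y| + |iteratedDeriv 4 f t| := abs_sub _ _
          _ ≤ 2 * M := by linarith [hM y, hM t]) x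
    calc |R x| = |f x - ∑ k ∈ Finset.range 5,
          ((k ! : ℝ)⁻¹ * (x - t) ^ k) * iteratedDeriv k f t| := rfl
      _ ≤ 2 * M / 24 * (x - t) ^ 4 + 2 * M / (24 * 1 ^ 2) * (x - t) ^ 6 := h
  -- integrability facts for each n ≥ 1
  have hbase : ∀ n : ℕ, 1 ≤ n → ∀ k : ℕ,
      Integrable (fun x => (x - t) ^ k) (gammaMeasure n ((n : ℝ) / t)) := by
    intro n hn k
    have hn' : (0:ℝ) < n := by exact_mod_cast hn
    exact integrable_centered hn' (by positivity) t k
  have hPint : ∀ n : ℕ, 1 ≤ n → Integrable P (gammaMeasure n ((n : ℝ) / t)) := by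
    intro n hn
    rw [hP]
    exact integrable_finset_sum _ fun k _ =>
      ((hbase n hn k).const_mul ((k ! : ℝ)⁻¹)).mul_const (c k)
  have hRint : ∀ n : ℕ, 1 ≤ n → Integrable R (gammaMeasure n ((n : ℝ) / t)) := by
    intro n hn
    refine Integrable.mono'
      (((hbase n hn 4).const_mul (2 * M / 24)).add
        ((hbase n hn 6).const_mul (2 * M / (24 * 1 ^ 2))))
      hRcont.aestronglyMeasurable (ae_of_all _ fun x => ?_)
    rw [Real.norm_eq_abs]
    exact hglob x
  -- key algebraic identity for n ≥ 1
  have key : ∀ n : ℕ, 1 ≤ n →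
      (n : ℝ) ^ 2 * ((∫ x, f x ∂(gammaMeasure n ((n : ℝ) / t))) - f t -
          t ^ 2 / (2 * n) * iteratedDeriv 2 f t)
        = (t ^ 3 / 3 * c 3 + t ^ 4 / 8 * c 4) + (t ^ 4 / 4 * c 4) * (1 / n)
          + (n : ℝ) ^ 2 * ∫ x, R x ∂(gammaMeasure n ((n : ℝ) / t)) := by
    intro n hn
    have hn' : (0:ℝ) < n := by exact_mod_cast hn
    have hnne : (n:ℝ) ≠ 0 := hn'.ne'
    have hsplitf : (∫ x, f x ∂(gammaMeasure n ((n : ℝ) / t)))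
        = (∫ x, P x ∂(gammaMeasure n ((n : ℝ) / t)))
          + ∫ x, R x ∂(gammaMeasure n ((n : ℝ) / t)) := by
      rw [← integral_add (hPint n hn) (hRint n hn)]
      refine integral_congr_ae (ae_of_all _ fun x => ?_)
      simp [hR]
    have hIP : (∫ x, P x ∂(gammaMeasure n ((n : ℝ) / t)))
        = c 0 + (2 ! : ℝ)⁻¹ * (t ^ 2 / n) * c 2
          + (3 ! : ℝ)⁻¹ * (2 * t ^ 3 / n ^ 2) * c 3
          + (4 ! : ℝ)⁻¹ * (3 * t ^ 4 / n ^ 2 + 6 * t ^ 4 / n ^ 3) * c 4 := by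
      rw [hP, integral_finset_sum _ fun k _ =>
        ((hbase n hn k).const_mul ((k ! : ℝ)⁻¹)).mul_const (c k)]
      have hterm : ∀ k : ℕ,
          (∫ x, ((k ! : ℝ)⁻¹ * (x - t) ^ k) * c k ∂(gammaMeasure n ((n : ℝ) / t)))
            = (k ! : ℝ)⁻¹ * (∫ x, (x - t) ^ k ∂(gammaMeasure n ((n : ℝ) / t))) * c k := by
        intro k
        rw [integral_mul_const, integral_const_mul]
      rw [Finset.sum_range_succ, Finset.sum_range_succ, Finset.sum_range_succ,
        Finset.sum_range_succ, Finset.sum_range_succ, Finset.sum_range_zero]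
      rw [hterm 0, hterm 1, hterm 2, hterm 3, hterm 4]
      rw [moment0 ht hn, moment1 ht hn, moment2 ht hn, moment3 ht hn, moment4 ht hn]
      norm_num [Nat.factorial]
    have hc0 : c 0 = f t := by simp [hc, iteratedDeriv_zero]
    have hc2 : iteratedDeriv 2 f t = c 2 := rfl
    rw [hsplitf, hIP, hc0, hc2]
    have hfac2 : ((2 ! : ℕ) : ℝ) = 2 := by norm_num [Nat.factorial]
    have hfac3 : ((3 ! : ℕ) : ℝ) = 6 := by norm_num [Nat.factorial]
    have hfac4 : ((4 ! : ℕ) : ℝ) = 24 := by norm_num [Nat.factorial]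
    rw [hfac2, hfac3, hfac4]
    field_simp
    ring
  -- the remainder term tends to 0
  have hR0 : Tendsto (fun n : ℕ =>
      (n : ℝ) ^ 2 * ∫ x, R x ∂(gammaMeasure n ((n : ℝ) / t))) atTop (nhds 0) := by
    rw [NormedAddCommGroup.tendsto_nhds_zero]
    intro ε hε
    -- choose ε₁ for the local term
    set ε₁ : ℝ := 12 * ε / (9 * t ^ 4 + 1) with hε₁def
    have hε₁ : 0 < ε₁ := by positivity
    -- continuity of the fourth derivative at t
    have hcont4 : ContinuousAt (iteratedDeriv 4 f) t :=
      (hf.continuous_iteratedDeriv 4 (le_refl _)).continuousAt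
    obtain ⟨δ₀, hδ₀, hδ₀'⟩ := Metric.continuousAt_iff.mp hcont4 ε₁ hε₁
    set δ : ℝ := δ₀ / 2 with hδdef
    have hδ : 0 < δ := by positivity
    have hloc : ∀ y, |y - t| ≤ δ →
        |iteratedDeriv 4 f y - iteratedDeriv 4 f t| ≤ ε₁ := by
      intro y hy
      have : dist y t < δ₀ := by
        rw [Real.dist_eq]
        calc |y - t| ≤ δ := hy
          _ < δ₀ := by rw [hδdef]; linarith
      exact (le_of_lt (by simpa [Real.dist_eq] using hδ₀' this))
    set C : ℝ := 2 * M / (24 * δ ^ 2) with hCdef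
    have hC0 : 0 ≤ C := by positivity
    -- second term eventually small
    have htail : Tendsto (fun n : ℕ => C * 265 * t ^ 6 * (1 / (n : ℝ))) atTop (nhds 0) := by
      have := tendsto_one_div_atTop_nhds_zero_nat.const_mul (C * 265 * t ^ 6)
      simpa using this
    have hev : ∀ᶠ n : ℕ in atTop, C * 265 * t ^ 6 * (1 / (n : ℝ)) < ε / 2 := by
      have := htail.eventually (eventually_lt_nhds (by positivity : (0:ℝ) < ε / 2))
      simpa using this
    filter_upwards [hev, eventually_ge_atTop 1] with n hn2 hn1
    have hn' : (0:ℝ) < n := by exact_mod_cast hn1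
    have hnne : (n:ℝ) ≠ 0 := hn'.ne'
    have hn1' : (1:ℝ) ≤ n := by exact_mod_cast hn1
    -- pointwise bound
    have hbnd : ∀ x, |R x| ≤ ε₁ / 24 * (x - t) ^ 4 + C * (x - t) ^ 6 := by
      intro x
      have := remainder_bound hf t hM hδ hloc x
      calc |R x| = |f x - ∑ k ∈ Finset.range 5,
            ((k ! : ℝ)⁻¹ * (x - t) ^ k) * iteratedDeriv k f t| := rfl
        _ ≤ ε₁ / 24 * (x - t) ^ 4 + 2 * M / (24 * δ ^ 2) * (x - t) ^ 6 := this
        _ = ε₁ / 24 * (x - t) ^ 4 + C * (x - t) ^ 6 := by rw [hCdef]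
    -- integral bound
    have hgint : Integrable (fun x => ε₁ / 24 * (x - t) ^ 4 + C * (x - t) ^ 6)
        (gammaMeasure n ((n : ℝ) / t)) :=
      ((hbase n hn1 4).const_mul _).add ((hbase n hn1 6).const_mul _)
    have hIb : ‖∫ x, R x ∂(gammaMeasure n ((n : ℝ) / t))‖
        ≤ ∫ x, (ε₁ / 24 * (x - t) ^ 4 + C * (x - t) ^ 6) ∂(gammaMeasure n ((n : ℝ) / t)) := by
      refine norm_integral_le_of_norm_le hgint (ae_of_all _ fun x => ?_)
      rw [Real.norm_eq_abs]
      exact hbnd x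
    have hIval : (∫ x, (ε₁ / 24 * (x - t) ^ 4 + C * (x - t) ^ 6)
          ∂(gammaMeasure n ((n : ℝ) / t)))
        = ε₁ / 24 * (3 * t ^ 4 / n ^ 2 + 6 * t ^ 4 / n ^ 3)
          + C * (15 * t ^ 6 / n ^ 3 + 130 * t ^ 6 / n ^ 4 + 120 * t ^ 6 / n ^ 5) := by
      rw [integral_add ((hbase n hn1 4).const_mul _) ((hbase n hn1 6).const_mul _),
        integral_const_mul, integral_const_mul, moment4 ht hn1, moment6 ht hn1]
    -- put it all together
    rw [norm_mul, Real.norm_eq_abs, Real.norm_eq_abs, abs_of_nonneg (by positivity : (0:ℝ) ≤ (n:ℝ)^2)]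
    have hchain : (n:ℝ) ^ 2 * |∫ x, R x ∂(gammaMeasure n ((n : ℝ) / t))|
        ≤ (n:ℝ) ^ 2 * (ε₁ / 24 * (3 * t ^ 4 / n ^ 2 + 6 * t ^ 4 / n ^ 3)
          + C * (15 * t ^ 6 / n ^ 3 + 130 * t ^ 6 / n ^ 4 + 120 * t ^ 6 / n ^ 5)) := by
      have := hIb
      rw [Real.norm_eq_abs] at this
      rw [hIval] at this
      nlinarith [sq_nonneg (n:ℝ)]
    have halg : (n:ℝ) ^ 2 * (ε₁ / 24 * (3 * t ^ 4 / n ^ 2 + 6 * t ^ 4 / n ^ 3)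
          + C * (15 * t ^ 6 / n ^ 3 + 130 * t ^ 6 / n ^ 4 + 120 * t ^ 6 / n ^ 5))
        = ε₁ / 24 * (3 * t ^ 4 + 6 * t ^ 4 * (1/n))
          + C * (15 * t ^ 6 * (1/n) + 130 * t ^ 6 * (1/n)^2 + 120 * t ^ 6 * (1/n)^3) := by
      field_simp
    have hu1 : (0:ℝ) < 1 / n := by positivity
    have hu2 : 1 / (n:ℝ) ≤ 1 := by
      rw [div_le_one hn']; exact hn1'
    have hb1 : ε₁ / 24 * (3 * t ^ 4 + 6 * t ^ 4 * (1/(n:ℝ))) ≤ ε / 2 := by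
      have h9 : 3 * t ^ 4 + 6 * t ^ 4 * (1/(n:ℝ)) ≤ 9 * t ^ 4 := by
        have := mul_le_mul_of_nonneg_left hu2 (show (0:ℝ) ≤ 6 * t ^ 4 by positivity)
        linarith
      have : ε₁ / 24 * (3 * t ^ 4 + 6 * t ^ 4 * (1/(n:ℝ))) ≤ ε₁ / 24 * (9 * t ^ 4) := by
        apply mul_le_mul_of_nonneg_left h9 (by positivity)
      refine this.trans ?_
      rw [hε₁def]
      rw [div_mul_eq_mul_div, div_le_iff₀ (by positivity : (0:ℝ) < 24)]
      rw [div_mul_eq_mul_div, div_le_iff₀ (by positivity : (0:ℝ) < 9 * t ^ 4 + 1)]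
      nlinarith
    have hb2 : C * (15 * t ^ 6 * (1/(n:ℝ)) + 130 * t ^ 6 * (1/(n:ℝ))^2
          + 120 * t ^ 6 * (1/(n:ℝ))^3) ≤ C * 265 * t ^ 6 * (1/(n:ℝ)) := by
      have e2 : (1/(n:ℝ))^2 ≤ 1/(n:ℝ) := by nlinarith
      have e3 : (1/(n:ℝ))^3 ≤ 1/(n:ℝ) := by nlinarith
      have m2 := mul_le_mul_of_nonneg_left e2 (show (0:ℝ) ≤ C * 130 * t ^ 6 by positivity)
      have m3 := mul_le_mul_of_nonneg_left e3 (show (0:ℝ) ≤ C * 120 * t ^ 6 by positivity)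
      nlinarith [m2, m3]
    calc (n:ℝ) ^ 2 * |∫ x, R x ∂(gammaMeasure n ((n : ℝ) / t))|
        ≤ ε₁ / 24 * (3 * t ^ 4 + 6 * t ^ 4 * (1/(n:ℝ)))
          + C * (15 * t ^ 6 * (1/(n:ℝ)) + 130 * t ^ 6 * (1/(n:ℝ))^2
            + 120 * t ^ 6 * (1/(n:ℝ))^3) := by rw [← halg]; exact hchain
      _ ≤ ε / 2 + C * 265 * t ^ 6 * (1/(n:ℝ)) := add_le_add hb1 hb2
      _ < ε / 2 + ε / 2 := by linarith
      _ = ε := by ring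
  -- assemble the limit
  have hlim : Tendsto (fun n : ℕ =>
      (t ^ 3 / 3 * c 3 + t ^ 4 / 8 * c 4) + (t ^ 4 / 4 * c 4) * (1 / n)
        + (n : ℝ) ^ 2 * ∫ x, R x ∂(gammaMeasure n ((n : ℝ) / t))) atTop
      (nhds ((t ^ 3 / 3 * c 3 + t ^ 4 / 8 * c 4) + (t ^ 4 / 4 * c 4) * 0 + 0)) := by
    exact (tendsto_const_nhds.add
      (tendsto_const_nhds.mul tendsto_one_div_atTop_nhds_zero_nat)).add hR0
  have hfin : Tendsto (fun n : ℕ =>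
      (t ^ 3 / 3 * c 3 + t ^ 4 / 8 * c 4) + (t ^ 4 / 4 * c 4) * (1 / n)
        + (n : ℝ) ^ 2 * ∫ x, R x ∂(gammaMeasure n ((n : ℝ) / t))) atTop
      (nhds (t ^ 4 / 8 * iteratedDeriv 4 f t + t ^ 3 / 3 * iteratedDeriv 3 f t)) := by
    have : (t ^ 4 / 8 * iteratedDeriv 4 f t + t ^ 3 / 3 * iteratedDeriv 3 f t)
        = ((t ^ 3 / 3 * c 3 + t ^ 4 / 8 * c 4) + (t ^ 4 / 4 * c 4) * 0 + 0) := by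
      simp [hc]; ring
    rw [this]
    exact hlim
  refine hfin.congr' ?_
  filter_upwards [eventually_ge_atTop 1] with n hn
  exact (key n hn).symm
end

section
/- Let t > 0 and let f : ℝ → ℝ be six times continuously differentiable with bounded sixth derivative. Set b_1(t) = (t²/2) f''(t) and b_2(t) = (t⁴/8) f⁽⁴⁾(t) + (t³/3) f⁽³⁾(t). Then lim_{n→∞} n³ · ( ∫ f(x) dΓ(n, n/t)(x) − f(t) − b_1(t)/n − b_2(t)/n² ) = (t⁶/48) f⁽⁶⁾(t) + (t⁵/6) f⁽⁵⁾(t) + (t⁴/4) f⁽⁴⁾(t). -/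
open MeasureTheory ProbabilityTheory Filter

namespace GammaRand

open Real Set

lemma Gamma_add_nat {a : ℝ} (ha : 0 < a) (k : ℕ) :
    Real.Gamma (a + k) = (∏ i ∈ Finset.range k, (a + i)) * Real.Gamma a := by
  induction k with
  | zero => simp
  | succ k ih =>
    have h1 : a + (k + 1 : ℕ) = (a + k) + 1 := by push_cast; ring
    rw [h1, Real.Gamma_add_one (by positivity), ih, Finset.prod_range_succ]
    ring

lemma prod_pos {a : ℝ} (ha : 0 < a) (k : ℕ) : 0 < ∏ i ∈ Finset.range k, (a + (i : ℝ)) :=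
  Finset.prod_pos fun i _ => by positivity

lemma pdf_identity {a r : ℝ} (ha : 0 < a) (hr : 0 < r) (k : ℕ) {x : ℝ} (hx : 0 < x) :
    x ^ k * gammaPDFReal a r x
      = ((∏ i ∈ Finset.range k, (a + i)) / r ^ k) * gammaPDFReal (a + k) r x := by
  have hΓa : Real.Gamma a ≠ 0 := (Real.Gamma_pos_of_pos ha).ne'
  have hp := (prod_pos ha k).ne'
  rw [gammaPDFReal, gammaPDFReal, if_pos hx.le, if_pos hx.le]
  rw [show a + (k : ℝ) - 1 = (a - 1) + (k : ℝ) by ring]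
  rw [Real.rpow_add hx, Real.rpow_natCast x k]
  rw [Real.rpow_add hr a k, Real.rpow_natCast r k]
  rw [Gamma_add_nat ha k]
  field_simp

lemma lintegral_pow_gamma {a r : ℝ} (ha : 0 < a) (hr : 0 < r) (k : ℕ) :
    ∫⁻ x, ENNReal.ofReal (x ^ k) ∂(gammaMeasure a r)
      = ENNReal.ofReal ((∏ i ∈ Finset.range k, (a + i)) / r ^ k) := by
  have hc : (0:ℝ) ≤ (∏ i ∈ Finset.range k, (a + i)) / r ^ k :=
    le_of_lt (div_pos (prod_pos ha k) (pow_pos hr k))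
  have hmeas : Measurable fun x : ℝ => ENNReal.ofReal (x ^ k) :=
    (measurable_id.pow_const k).ennreal_ofReal
  have hpdf : Measurable (gammaPDF a r) := (measurable_gammaPDFReal a r).ennreal_ofReal
  rw [gammaMeasure, lintegral_withDensity_eq_lintegral_mul _ hpdf hmeas]
  have h0 : ∀ᵐ x : ℝ, x ≠ 0 := by
    rw [ae_iff]
    simpa using volume_singleton (a := (0:ℝ))
  have hae : (gammaPDF a r * fun x : ℝ => ENNReal.ofReal (x ^ k))
      =ᵐ[volume] fun x => ENNReal.ofReal ((∏ i ∈ Finset.range k, (a + i)) / r ^ k)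
        * gammaPDF (a + k) r x := by
    filter_upwards [h0] with x hx
    rcases hx.lt_or_gt with hneg | hpos
    · simp [gammaPDF_of_neg hneg, Pi.mul_apply]
    · simp only [Pi.mul_apply, gammaPDF]
      rw [← ENNReal.ofReal_mul (gammaPDFReal_nonneg ha hr x), ← ENNReal.ofReal_mul hc]
      rw [mul_comm (gammaPDFReal a r x) (x ^ k), pdf_identity ha hr k hpos]
  have hpdf2 : Measurable (gammaPDF (a + k) r) := (measurable_gammaPDFReal _ r).ennreal_ofReal
  rw [lintegral_congr_ae hae, lintegral_const_mul _ hpdf2,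
    lintegral_gammaPDF_eq_one (by positivity) hr, mul_one]

lemma gammaMeasure_ae_pos {a r : ℝ} : ∀ᵐ x ∂(gammaMeasure a r), 0 < x := by
  rw [ae_iff]
  have : {x : ℝ | ¬ 0 < x} = Iic 0 := by ext x; simp
  rw [this, gammaMeasure, withDensity_apply _ measurableSet_Iic,
    setLIntegral_congr (Filter.EventuallyEq.symm Iio_ae_eq_Iic),
    lintegral_gammaPDF_of_nonpos le_rfl]

lemma integrable_pow_gamma {a r : ℝ} (ha : 0 < a) (hr : 0 < r) (k : ℕ) :
    Integrable (fun x : ℝ => x ^ k) (gammaMeasure a r) := by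
  have hm : Measurable (fun x : ℝ => x ^ k) := by fun_prop
  refine ⟨hm.aestronglyMeasurable, ?_⟩
  rw [hasFiniteIntegral_iff_norm]
  have : (fun x : ℝ => ENNReal.ofReal ‖x ^ k‖)
      =ᵐ[gammaMeasure a r] fun x => ENNReal.ofReal (x ^ k) := by
    filter_upwards [gammaMeasure_ae_pos (a := a) (r := r)] with x hx
    rw [Real.norm_eq_abs, abs_of_nonneg (by positivity)]
  rw [lintegral_congr_ae this, lintegral_pow_gamma ha hr k]
  exact ENNReal.ofReal_lt_top

lemma integral_pow_gamma {a r : ℝ} (ha : 0 < a) (hr : 0 < r) (k : ℕ) :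
    ∫ x, x ^ k ∂(gammaMeasure a r) = (∏ i ∈ Finset.range k, (a + i)) / r ^ k := by
  have hc : (0:ℝ) ≤ (∏ i ∈ Finset.range k, (a + i)) / r ^ k :=
    le_of_lt (div_pos (prod_pos ha k) (pow_pos hr k))
  have hm : Measurable (fun x : ℝ => x ^ k) := by fun_prop
  rw [integral_eq_lintegral_of_nonneg_ae ?_ hm.aestronglyMeasurable]
  · rw [lintegral_pow_gamma ha hr k, ENNReal.toReal_ofReal hc]
  · filter_upwards [gammaMeasure_ae_pos (a := a) (r := r)] with x hx
    positivity

lemma centered_eq (t : ℝ) (k : ℕ) : (fun x : ℝ => (x - t) ^ k)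
    = fun x => ∑ j ∈ Finset.range (k + 1), x ^ j * (-t) ^ (k - j) * (k.choose j) := by
  funext x
  rw [sub_eq_add_neg, add_pow]

lemma integrable_centered {a r : ℝ} (ha : 0 < a) (hr : 0 < r) (t : ℝ) (k : ℕ) :
    Integrable (fun x : ℝ => (x - t) ^ k) (gammaMeasure a r) := by
  rw [centered_eq]
  exact integrable_finset_sum _ fun j _ =>
    ((integrable_pow_gamma ha hr j).mul_const _).mul_const _

lemma integral_centered {a r : ℝ} (ha : 0 < a) (hr : 0 < r) (t : ℝ) (k : ℕ) :
    ∫ x, (x - t) ^ k ∂(gammaMeasure a r)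
      = ∑ j ∈ Finset.range (k + 1),
          (∏ i ∈ Finset.range j, (a + i)) / r ^ j * (-t) ^ (k - j) * (k.choose j) := by
  rw [centered_eq, integral_finset_sum _ fun j _ =>
    ((integrable_pow_gamma ha hr j).mul_const _).mul_const _]
  refine Finset.sum_congr rfl fun j _ => ?_
  rw [integral_mul_const, integral_mul_const, integral_pow_gamma ha hr j]

/-! ### Taylor machinery -/

lemma iteratedDeriv_sum_centered (c : ℕ → ℝ) (s : Finset ℕ) (t : ℝ) (j : ℕ) :
    iteratedDeriv j (fun x : ℝ => ∑ k ∈ s, c k * (x - t) ^ k)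
      = fun x => ∑ k ∈ s, c k * ((k.descFactorial j : ℝ) * (x - t) ^ (k - j)) := by
  induction j with
  | zero => simp
  | succ j ih =>
    rw [iteratedDeriv_succ, ih]
    funext x
    have hd : ∀ k : ℕ, HasDerivAt (fun x : ℝ => c k * ((k.descFactorial j : ℝ) * (x - t) ^ (k - j)))
        (c k * ((k.descFactorial j : ℝ) * ((k - j : ℕ) * (x - t) ^ (k - j - 1)))) x := by
      intro k
      simpa using (((hasDerivAt_id x).sub_const t).pow (k - j)).const_mul
        ((k.descFactorial j : ℝ)) |>.const_mul (c k)
    rw [deriv_fun_sum fun k _ => (hd k).differentiableAt]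
    refine Finset.sum_congr rfl fun k _ => ?_
    rw [(hd k).deriv, Nat.descFactorial_succ, show k - (j + 1) = k - j - 1 by omega]
    push_cast
    ring

lemma abs_pow_six (y : ℝ) : |y| ^ 6 = y ^ 6 := by
  rw [← abs_pow]
  exact abs_of_nonneg (by positivity)

lemma taylor_aux (t : ℝ) :
    ∀ (m : ℕ) (h : ℝ → ℝ), ContDiff ℝ m h → (∀ k, k < m → iteratedDeriv k h t = 0) →
      ∀ (C x : ℝ), (∀ y, |y - t| ≤ |x - t| → |iteratedDeriv m h y| ≤ C) →
      |h x| ≤ C * |x - t| ^ m := by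
  intro m
  induction m with
  | zero =>
    intro h _ _ C x hC
    simpa using hC x le_rfl
  | succ m IH =>
    intro h hh h0 C x hC
    have hC0 : 0 ≤ C := le_trans (abs_nonneg _) (hC t (by simp [abs_nonneg]))
    have hcast : ContDiff ℝ ((m : WithTop ℕ∞) + 1) h := by exact_mod_cast hh
    have hD : Differentiable ℝ h := (contDiff_succ_iff_deriv.mp hcast).1
    have hh' : ContDiff ℝ m (deriv h) := (contDiff_succ_iff_deriv.mp hcast).2.2
    have h0' : ∀ k, k < m → iteratedDeriv k (deriv h) t = 0 := by
      intro k hk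
      rw [← iteratedDeriv_succ']
      exact h0 (k + 1) (by omega)
    have key : ∀ y ∈ Metric.closedBall t |x - t|, ‖deriv h y‖ ≤ C * |x - t| ^ m := by
      intro y hy
      rw [Metric.mem_closedBall, Real.dist_eq] at hy
      have := IH (deriv h) hh' h0' C y (fun z hz => by
        rw [← iteratedDeriv_succ']
        exact hC z (le_trans hz hy))
      calc ‖deriv h y‖ ≤ C * |y - t| ^ m := this
        _ ≤ C * |x - t| ^ m :=
          mul_le_mul_of_nonneg_left (pow_le_pow_left₀ (abs_nonneg _) hy m) hC0
    have ht0 : h t = 0 := by simpa using h0 0 (by omega)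
    have := Convex.norm_image_sub_le_of_norm_deriv_le
      (fun y _ => hD y) key (convex_closedBall t |x - t|)
      (Metric.mem_closedBall_self (abs_nonneg _))
      (by rw [Metric.mem_closedBall, Real.dist_eq])
    rw [ht0, sub_zero] at this
    calc |h x| ≤ C * |x - t| ^ m * ‖x - t‖ := this
      _ = C * |x - t| ^ (m + 1) := by rw [Real.norm_eq_abs, pow_succ]; ring

lemma iteratedDeriv_fun_sub {f g : ℝ → ℝ} {n : ℕ} (hf : ContDiff ℝ n f) (hg : ContDiff ℝ n g)
    (x : ℝ) :
    iteratedDeriv n (fun y => f y - g y) x = iteratedDeriv n f x - iteratedDeriv n g x := by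
  simp only [← iteratedDerivWithin_univ]
  exact iteratedDerivWithin_sub (Set.mem_univ x) uniqueDiffOn_univ hf.contDiffWithinAt hg.contDiffWithinAt

end GammaRand

open GammaRand Real Set

set_option maxHeartbeats 4000000 in
/-- Third-order randomisation error: for `t > 0` and `f` of class `C⁶` with bounded sixth
derivative, with `b₁(t) = (t²/2) f''(t)` and `b₂(t) = (t⁴/8) f⁽⁴⁾(t) + (t³/3) f⁽³⁾(t)`,
`n³ (∫ f dΓ(n,n/t) - f(t) - b₁(t)/n - b₂(t)/n²) →
  (t⁶/48) f⁽⁶⁾(t) + (t⁵/6) f⁽⁵⁾(t) + (t⁴/4) f⁽⁴⁾(t)`. -/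
theorem gamma_randomisation_third_order (t : ℝ) (ht : 0 < t) (f : ℝ → ℝ)
    (hf : ContDiff ℝ 6 f)
    (hf_bdd : ∃ M : ℝ, ∀ x : ℝ, |iteratedDeriv 6 f x| ≤ M) :
    Tendsto (fun n : ℕ =>
        (n : ℝ) ^ 3 *
          ((∫ x, f x ∂(gammaMeasure n ((n : ℝ) / t))) - f t -
            (t ^ 2 / 2 * iteratedDeriv 2 f t) / n -
            (t ^ 4 / 8 * iteratedDeriv 4 f t + t ^ 3 / 3 * iteratedDeriv 3 f t) / n ^ 2))
      atTop
      (nhds (t ^ 6 / 48 * iteratedDeriv 6 f t + t ^ 5 / 6 * iteratedDeriv 5 f t +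
        t ^ 4 / 4 * iteratedDeriv 4 f t)) := by
  obtain ⟨M, hM⟩ := hf_bdd
  have hM0 : 0 ≤ M := le_trans (abs_nonneg _) (hM t)
  set c : ℕ → ℝ := fun k => iteratedDeriv k f t / (k.factorial : ℝ) with hc
  set P : ℝ → ℝ := fun x => ∑ k ∈ Finset.range 7, c k * (x - t) ^ k with hP
  set G : ℝ → ℝ := fun x => f x - P x with hGdef
  set d6 : ℝ := iteratedDeriv 6 f t with hd6def
  -- smoothness facts
  have hPc : ∀ m : WithTop ℕ∞, ContDiff ℝ m P :=
    fun m => ContDiff.sum fun k _ => contDiff_const.mul ((contDiff_id.sub contDiff_const).pow k)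
  have hGc : ContDiff ℝ 6 G := hf.sub (hPc 6)
  have hGcont : Continuous G := hf.continuous.sub (hPc 6).continuous
  -- sixth derivative of G
  have hG6 : ∀ y : ℝ, iteratedDeriv 6 G y = iteratedDeriv 6 f y - d6 := by
    intro y
    rw [hGdef]
    rw [iteratedDeriv_fun_sub hf (hPc 6) y]
    congr 1
    rw [hP, iteratedDeriv_sum_centered]
    norm_num [Finset.sum_range_succ, Nat.descFactorial, hc, Nat.factorial]
    exact hd6def.symm
  -- lower derivatives of G vanish at t
  have hGk : ∀ k, k < 6 → iteratedDeriv k G t = 0 := by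
    intro k hk
    have hfk : ContDiff ℝ k f := hf.of_le (by exact_mod_cast (show (k:ℕ) ≤ 6 by omega))
    rw [hGdef, iteratedDeriv_fun_sub hfk (hPc k) t, hP, iteratedDeriv_sum_centered]
    interval_cases k <;>
      norm_num [Finset.sum_range_succ, Nat.descFactorial, hc, Nat.factorial, iteratedDeriv_zero]
  -- global bound on G
  have hGglob : ∀ x : ℝ, |G x| ≤ (M + |d6|) * |x - t| ^ 6 := by
    intro x
    refine taylor_aux t 6 G hGc hGk _ x fun y _ => ?_
    rw [hG6 y]
    calc |iteratedDeriv 6 f y - d6| ≤ |iteratedDeriv 6 f y| + |d6| := abs_sub _ _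
      _ ≤ M + |d6| := add_le_add_left (hM y) _
  -- the measures
  set μ : ℕ → Measure ℝ := fun n => gammaMeasure n ((n : ℝ) / t) with hμ
  -- sequence u = 1/n
  set u : ℕ → ℝ := fun n => 1 / (n : ℝ) with hu_def
  have hu : Tendsto u atTop (nhds 0) := tendsto_one_div_atTop_nhds_zero_nat
  set L : ℝ := t ^ 6 / 48 * iteratedDeriv 6 f t + t ^ 5 / 6 * iteratedDeriv 5 f t +
      t ^ 4 / 4 * iteratedDeriv 4 f t with hL
  set DD : ℕ → ℝ := fun n => L + (t ^ 5 / 5 * iteratedDeriv 5 f t + 13 * t ^ 6 / 72 * d6) * u n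
      + (t ^ 6 / 6 * d6) * (u n) ^ 2 with hDD
  set R : ℕ → ℝ := fun n => (n : ℝ) ^ 3 * ∫ x, G x ∂(μ n) with hR
  -- basic facts for n ≥ 1
  have hbase : ∀ n : ℕ, 1 ≤ n → (0 : ℝ) < (n : ℝ) ∧ (0 : ℝ) < (n : ℝ) / t := by
    intro n hn
    have : (0:ℝ) < n := by exact_mod_cast hn
    exact ⟨this, by positivity⟩
  -- integrability of G
  have hGint : ∀ n : ℕ, 1 ≤ n → Integrable G (μ n) := by
    intro n hn
    obtain ⟨hn0, hr0⟩ := hbase n hn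
    refine Integrable.mono' (((integrable_centered hn0 hr0 t 6).const_mul (M + |d6|)))
      hGcont.aestronglyMeasurable ?_
    filter_upwards with x
    rw [Real.norm_eq_abs]
    calc |G x| ≤ (M + |d6|) * |x - t| ^ 6 := hGglob x
      _ = (M + |d6|) * (x - t) ^ 6 := by rw [abs_pow_six]
  -- decomposition of the integral of f
  have hsplit : ∀ n : ℕ, 1 ≤ n → ∫ x, f x ∂(μ n)
      = (∑ k ∈ Finset.range 7, c k * ∫ x, (x - t) ^ k ∂(μ n)) + ∫ x, G x ∂(μ n) := by
    intro n hn
    obtain ⟨hn0, hr0⟩ := hbase n hn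
    have hfeq : f = fun x => (∑ k ∈ Finset.range 7, c k * (x - t) ^ k) + G x := by
      funext x
      simp only [hGdef, hP]
      ring
    rw [show ∫ x, f x ∂(μ n) = ∫ x, ((∑ k ∈ Finset.range 7, c k * (x - t) ^ k) + G x) ∂(μ n)
      from by rw [← hfeq]]
    rw [integral_add (integrable_finset_sum _ fun k _ =>
        (integrable_centered hn0 hr0 t k).const_mul _) (hGint n hn)]
    congr 1
    rw [integral_finset_sum _ fun k _ => (integrable_centered hn0 hr0 t k).const_mul _]
    exact Finset.sum_congr rfl fun k _ => integral_const_mul _ _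
  -- explicit centered moments
  have hIval : ∀ n : ℕ, 1 ≤ n → ∀ k : ℕ, ∫ x, (x - t) ^ k ∂(μ n)
      = ∑ j ∈ Finset.range (k + 1),
          (∏ i ∈ Finset.range j, ((n:ℝ) + i)) / ((n:ℝ)/t) ^ j * (-t) ^ (k - j) * (k.choose j) := by
    intro n hn k
    obtain ⟨hn0, hr0⟩ := hbase n hn
    exact integral_centered hn0 hr0 t k
  have hI6 : ∀ n : ℕ, 1 ≤ n → ∫ x, (x - t) ^ 6 ∂(μ n)
      = t^6 * (15/(n:ℝ)^3 + 130/(n:ℝ)^4 + 120/(n:ℝ)^5) := by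
    intro n hn
    obtain ⟨hn0, _⟩ := hbase n hn
    rw [hIval n hn 6]
    simp only [Finset.sum_range_succ, Finset.prod_range_succ, Finset.prod_range_zero,
      Finset.sum_range_zero]
    norm_num [Nat.choose]
    field_simp
    ring
  have hI8 : ∀ n : ℕ, 1 ≤ n → ∫ x, (x - t) ^ 8 ∂(μ n)
      = t^8 * (105/(n:ℝ)^4 + 2380/(n:ℝ)^5 + 7308/(n:ℝ)^6 + 5040/(n:ℝ)^7) := by
    intro n hn
    obtain ⟨hn0, _⟩ := hbase n hn
    rw [hIval n hn 8]
    simp only [Finset.sum_range_succ, Finset.prod_range_succ, Finset.prod_range_zero,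
      Finset.sum_range_zero]
    norm_num [Nat.choose]
    field_simp
    ring
  have hI0 : ∀ n : ℕ, 1 ≤ n → ∫ x, (x - t) ^ 0 ∂(μ n) = 1 := by
    intro n hn
    rw [hIval n hn 0]
    norm_num
  have hI1 : ∀ n : ℕ, 1 ≤ n → ∫ x, (x - t) ^ 1 ∂(μ n) = 0 := by
    intro n hn
    obtain ⟨hn0, _⟩ := hbase n hn
    rw [hIval n hn 1]
    simp only [Finset.sum_range_succ, Finset.prod_range_succ, Finset.prod_range_zero,
      Finset.sum_range_zero]
    norm_num [Nat.choose]
    field_simp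
    ring
  have hI2 : ∀ n : ℕ, 1 ≤ n → ∫ x, (x - t) ^ 2 ∂(μ n) = t^2 / (n:ℝ) := by
    intro n hn
    obtain ⟨hn0, _⟩ := hbase n hn
    rw [hIval n hn 2]
    simp only [Finset.sum_range_succ, Finset.prod_range_succ, Finset.prod_range_zero,
      Finset.sum_range_zero]
    norm_num [Nat.choose]
    field_simp
    ring
  have hI3 : ∀ n : ℕ, 1 ≤ n → ∫ x, (x - t) ^ 3 ∂(μ n) = 2 * t^3 / (n:ℝ)^2 := by
    intro n hn
    obtain ⟨hn0, _⟩ := hbase n hn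
    rw [hIval n hn 3]
    simp only [Finset.sum_range_succ, Finset.prod_range_succ, Finset.prod_range_zero,
      Finset.sum_range_zero]
    norm_num [Nat.choose]
    field_simp
    ring
  have hI4 : ∀ n : ℕ, 1 ≤ n → ∫ x, (x - t) ^ 4 ∂(μ n)
      = t^4 * (3/(n:ℝ)^2 + 6/(n:ℝ)^3) := by
    intro n hn
    obtain ⟨hn0, _⟩ := hbase n hn
    rw [hIval n hn 4]
    simp only [Finset.sum_range_succ, Finset.prod_range_succ, Finset.prod_range_zero,
      Finset.sum_range_zero]
    norm_num [Nat.choose]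
    field_simp
    ring
  have hI5 : ∀ n : ℕ, 1 ≤ n → ∫ x, (x - t) ^ 5 ∂(μ n)
      = t^5 * (20/(n:ℝ)^3 + 24/(n:ℝ)^4) := by
    intro n hn
    obtain ⟨hn0, _⟩ := hbase n hn
    rw [hIval n hn 5]
    simp only [Finset.sum_range_succ, Finset.prod_range_succ, Finset.prod_range_zero,
      Finset.sum_range_zero]
    norm_num [Nat.choose]
    field_simp
    ring
  -- the eventual identity
  have hEq : ∀ᶠ n : ℕ in atTop, (n : ℝ) ^ 3 *
          ((∫ x, f x ∂(μ n)) - f t -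
            (t ^ 2 / 2 * iteratedDeriv 2 f t) / n -
            (t ^ 4 / 8 * iteratedDeriv 4 f t + t ^ 3 / 3 * iteratedDeriv 3 f t) / n ^ 2)
      = DD n + R n := by
    filter_upwards [eventually_ge_atTop 1] with n hn
    obtain ⟨hn0, _⟩ := hbase n hn
    have hsum : (∑ k ∈ Finset.range 7, c k * ∫ x, (x - t) ^ k ∂(μ n)) = f t
        + iteratedDeriv 2 f t * (t^2 / (n:ℝ)) / 2
        + iteratedDeriv 3 f t * (2 * t^3 / (n:ℝ)^2) / 6
        + iteratedDeriv 4 f t * (t^4 * (3/(n:ℝ)^2 + 6/(n:ℝ)^3)) / 24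
        + iteratedDeriv 5 f t * (t^5 * (20/(n:ℝ)^3 + 24/(n:ℝ)^4)) / 120
        + iteratedDeriv 6 f t * (t^6 * (15/(n:ℝ)^3 + 130/(n:ℝ)^4 + 120/(n:ℝ)^5)) / 720 := by
      rw [Finset.sum_range_succ, Finset.sum_range_succ, Finset.sum_range_succ,
        Finset.sum_range_succ, Finset.sum_range_succ, Finset.sum_range_succ,
        Finset.sum_range_succ, Finset.sum_range_zero]
      rw [hI0 n hn, hI1 n hn, hI2 n hn, hI3 n hn, hI4 n hn, hI5 n hn, hI6 n hn]
      simp only [hc]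
      norm_num [Nat.factorial, iteratedDeriv_zero]
      ring
    rw [hsplit n hn, hsum]
    simp only [hDD, hR, hL, hu_def, hd6def]
    field_simp
    ring
  -- limit of the deterministic part
  have hDDlim : Tendsto DD atTop (nhds L) := by
    have h1 : Tendsto (fun n => (t ^ 5 / 5 * iteratedDeriv 5 f t + 13 * t ^ 6 / 72 * d6) * u n)
        atTop (nhds ((t ^ 5 / 5 * iteratedDeriv 5 f t + 13 * t ^ 6 / 72 * d6) * 0)) :=
      hu.const_mul _
    have h2 : Tendsto (fun n => (t ^ 6 / 6 * d6) * (u n) ^ 2)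
        atTop (nhds ((t ^ 6 / 6 * d6) * 0 ^ 2)) := (hu.pow 2).const_mul _
    have := (tendsto_const_nhds (x := L) (f := atTop)).add (h1.add h2)
    simpa using this.congr fun n => by rw [hDD]; ring
  -- limit of the random part
  have hRlim : Tendsto R atTop (nhds 0) := by
    rw [NormedAddCommGroup.tendsto_nhds_zero]
    intro ε hε
    set ε' : ℝ := ε / (16 * t ^ 6) with hε'def
    have hε' : 0 < ε' := by positivity
    have hc6 : Continuous (iteratedDeriv 6 f) := hf.continuous_iteratedDeriv 6 le_rfl
    obtain ⟨δ, hδ0, hδ⟩ := Metric.continuousAt_iff.mp hc6.continuousAt ε' hε'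
    set δ' : ℝ := δ / 2 with hδ'def
    have hδ'0 : 0 < δ' := by positivity
    set C' : ℝ := (M + |d6|) / δ' ^ 2 with hC'def
    have hC'0 : 0 ≤ C' := by positivity
    -- pointwise bound
    have hbound : ∀ x : ℝ, |G x| ≤ ε' * (x - t) ^ 6 + C' * (x - t) ^ 8 := by
      intro x
      have hxt6 : |x - t| ^ 6 = (x - t) ^ 6 := abs_pow_six _
      rcases le_or_gt |x - t| δ' with hle | hlt
      · have h1 : |G x| ≤ ε' * |x - t| ^ 6 := by
          refine taylor_aux t 6 G hGc hGk ε' x fun y hy => ?_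
          rw [hG6 y]
          have hyd : dist y t < δ := by
            rw [Real.dist_eq]
            calc |y - t| ≤ |x - t| := hy
              _ ≤ δ' := hle
              _ < δ := by rw [hδ'def]; linarith
          have := hδ hyd
          rw [Real.dist_eq] at this
          exact this.le
        have h2 : 0 ≤ C' * (x - t) ^ 8 := by positivity
        rw [hxt6] at h1
        linarith
      · have h1 := hGglob x
        rw [hxt6] at h1
        have h2 : δ' ^ 2 ≤ (x - t) ^ 2 := by
          rw [← sq_abs (x - t)]
          exact pow_le_pow_left₀ hδ'0.le hlt.le 2
        have h3 : (M + |d6|) * (x - t) ^ 6 ≤ C' * (x - t) ^ 8 := by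
          rw [hC'def, div_mul_eq_mul_div, le_div_iff₀ (by positivity)]
          have h6 : (0:ℝ) ≤ (x - t) ^ 6 := by positivity
          have hMd : (0:ℝ) ≤ M + |d6| := by positivity
          calc (M + |d6|) * (x - t) ^ 6 * δ' ^ 2 ≤ (M + |d6|) * (x - t) ^ 6 * (x - t) ^ 2 := by
                apply mul_le_mul_of_nonneg_left h2 (by positivity)
            _ = (M + |d6|) * (x - t) ^ 8 := by ring
        have h4 : 0 ≤ ε' * (x - t) ^ 6 := by positivity
        linarith
    -- integral bound
    have hIbound : ∀ n : ℕ, 1 ≤ n → ‖R n‖ ≤ ε' * (t^6 * (15 + 130 * u n + 120 * (u n)^2))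
        + C' * (t^8 * (105 * u n + 2380 * (u n)^2 + 7308 * (u n)^3 + 5040 * (u n)^4)) := by
      intro n hn
      obtain ⟨hn0, hr0⟩ := hbase n hn
      have hint6 := integrable_centered hn0 hr0 t 6
      have hint8 := integrable_centered hn0 hr0 t 8
      have hintb : Integrable (fun x => ε' * (x - t) ^ 6 + C' * (x - t) ^ 8) (μ n) :=
        (hint6.const_mul _).add (hint8.const_mul _)
      have step1 : ‖∫ x, G x ∂(μ n)‖ ≤ ∫ x, ‖G x‖ ∂(μ n) := norm_integral_le_integral_norm G
      have step2 : ∫ x, ‖G x‖ ∂(μ n) ≤ ∫ x, (ε' * (x - t) ^ 6 + C' * (x - t) ^ 8) ∂(μ n) := by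
        refine integral_mono (hGint n hn).norm hintb fun x => ?_
        rw [Real.norm_eq_abs]
        exact hbound x
      have step3 : ∫ x, (ε' * (x - t) ^ 6 + C' * (x - t) ^ 8) ∂(μ n)
          = ε' * ∫ x, (x - t) ^ 6 ∂(μ n) + C' * ∫ x, (x - t) ^ 8 ∂(μ n) := by
        rw [integral_add (hint6.const_mul _) (hint8.const_mul _), integral_const_mul,
          integral_const_mul]
      have hn3 : (0:ℝ) ≤ (n:ℝ)^3 := by positivity
      have : ‖R n‖ = (n:ℝ)^3 * ‖∫ x, G x ∂(μ n)‖ := by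
        rw [hR, norm_mul, Real.norm_eq_abs ((n:ℝ)^3), abs_of_nonneg hn3]
      rw [this]
      calc (n:ℝ)^3 * ‖∫ x, G x ∂(μ n)‖
          ≤ (n:ℝ)^3 * (ε' * ∫ x, (x - t) ^ 6 ∂(μ n) + C' * ∫ x, (x - t) ^ 8 ∂(μ n)) := by
            apply mul_le_mul_of_nonneg_left (le_trans step1 (step2.trans step3.le)) hn3
        _ = ε' * (t^6 * (15 + 130 * u n + 120 * (u n)^2))
            + C' * (t^8 * (105 * u n + 2380 * (u n)^2 + 7308 * (u n)^3 + 5040 * (u n)^4)) := by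
            rw [hI6 n hn, hI8 n hn, hu_def]
            field_simp
    -- limit of the bound
    have hblim : Tendsto (fun n => ε' * (t^6 * (15 + 130 * u n + 120 * (u n)^2))
        + C' * (t^8 * (105 * u n + 2380 * (u n)^2 + 7308 * (u n)^3 + 5040 * (u n)^4)))
        atTop (nhds (ε' * (15 * t^6))) := by
      have : Continuous (fun x : ℝ => ε' * (t^6 * (15 + 130 * x + 120 * x^2))
          + C' * (t^8 * (105 * x + 2380 * x^2 + 7308 * x^3 + 5040 * x^4))) := by fun_prop
      have h := (this.tendsto 0).comp hu
      simp only [Function.comp_def] at h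
      have heq : ε' * (t^6 * (15 + 130 * (0:ℝ) + 120 * (0:ℝ)^2))
          + C' * (t^8 * (105 * (0:ℝ) + 2380 * (0:ℝ)^2 + 7308 * (0:ℝ)^3 + 5040 * (0:ℝ)^4))
          = ε' * (15 * t^6) := by ring
      rw [heq] at h
      exact h
    have hlt : ε' * (15 * t^6) < ε := by
      rw [hε'def]
      rw [div_mul_eq_mul_div, div_lt_iff₀ (by positivity)]
      nlinarith [pow_pos ht 6]
    filter_upwards [hblim.eventually_lt_const hlt, eventually_ge_atTop 1] with n h1 h2
    exact lt_of_le_of_lt (hIbound n h2) h1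
  have hfin := hDDlim.add hRlim
  rw [add_zero] at hfin
  refine Tendsto.congr' ?_ hfin
  filter_upwards [hEq] with n h
  exact h.symm
end
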